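/- Let f be a tower-stable polynomial with integer coefficients, let a be a positive integer, and let b be an f-valid positive integer. Then there exists a sequence of positive integers (x_n)_{n≥1} such that for every n ≥ 1, b^n divides f^{x_n}(a) − x_n, and for every n ≥ 2 there exists an integer c_n with 0 ≤ c_n < b and x_n = c_n·b^{n−1} + x_{n−1}. -/

import Mathlib

/-- `σ` is a cyclic permutation of length `p` of its (finite) domain: it is a
bijection and the iterates of some element pass through all elements within
`p` steps. -/
def IsCyclicPermOfLength {F : Type*} (σ : F → F) (p : ℕ) : Prop :=
  Function.Bijective σ ∧ ∃ x : F, ∀ y : F, ∃ i : ℕ, i < p ∧ σ^[i] x = y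

/-- The reduction `f_m : ℤ/mℤ → ℤ/mℤ` of a polynomial `f ∈ ℤ[x]`. -/
def polyRed (f : Polynomial ℤ) (m : ℕ) : ZMod m → ZMod m :=
  fun x => Polynomial.eval₂ (Int.castRingHom (ZMod m)) x f

/-- The period of a self-map: the least positive `L` with `σ^[K+L] = σ^[K]`
for some `K`. -/
noncomputable def mapPeriod {F : Type*} (σ : F → F) : ℕ :=
  sInf {L : ℕ | 0 < L ∧ ∃ K : ℕ, σ^[K + L] = σ^[K]}

/-- `λ_f(n)`: the period of the reduction of `f` modulo `n`. -/
noncomputable def polyLambda (f : Polynomial ℤ) (n : ℕ) : ℕ :=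
  mapPeriod (polyRed f n)

/-- A polynomial `f ∈ ℤ[x]` is tower-stable if no reduction modulo a prime
`q` is a cyclic permutation of length `q`. -/
def PolyTowerStable (f : Polynomial ℤ) : Prop :=
  ∀ q : ℕ, q.Prime → ¬ IsCyclicPermOfLength (polyRed f q) q

/-- `b` is valid if `p ∣ b` and `q ∣ p − 1` (`p`, `q` prime) imply `q ∣ b`. -/
def ValidNum (b : ℕ) : Prop :=
  ∀ p q : ℕ, p.Prime → q.Prime → p ∣ b → q ∣ p - 1 → q ∣ b

/-- `b` is `f`-valid if it is square-free, valid, and `p ∣ b`, `q ∣ λ_f(p)`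
(`p`, `q` prime) imply `q ∣ b`. -/
def FValid (f : Polynomial ℤ) (b : ℕ) : Prop :=
  Squarefree b ∧ ValidNum b ∧
    ∀ p q : ℕ, p.Prime → q.Prime → p ∣ b → q ∣ polyLambda f p → q ∣ b

set_option linter.unusedSectionVars false
set_option linter.unusedVariables false
set_option linter.unnecessarySimpa false
set_option linter.unusedTactic false
set_option linter.unreachableTactic false
set_option maxHeartbeats 1000000

open Polynomial Finset

namespace Stmt2

noncomputable section

variable (f : Polynomial ℤ)

/-- The iteration map. -/
def F (z : ℤ) : ℤ := f.eval z

variable (a : ℕ)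

/-- The orbit of `a`. -/
def It (x : ℕ) : ℤ := (F f)^[x] (a : ℤ)

lemma F_dvd {m u v : ℤ} (h : m ∣ u - v) : m ∣ F f u - F f v :=
  dvd_trans h (sub_dvd_eval_sub u v f)

lemma F_iter_dvd (k : ℕ) {m u v : ℤ} (h : m ∣ u - v) :
    m ∣ (F f)^[k] u - (F f)^[k] v := by
  induction k with
  | zero => simpa using h
  | succ n ih =>
      rw [Function.iterate_succ_apply', Function.iterate_succ_apply']
      exact F_dvd f ih

lemma It_add (x y : ℕ) : It f a (x + y) = (F f)^[y] (It f a x) := by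
  rw [It, It, Nat.add_comm, Function.iterate_add_apply]

lemma It_dvd_of_dvd {m : ℤ} {x y r : ℕ} (h : m ∣ It f a x - It f a y) :
    m ∣ It f a (x + r) - It f a (y + r) := by
  rw [It_add, It_add]
  exact F_iter_dvd f r h

/-- product of derivatives along an orbit -/
def DP (u : ℤ) (k : ℕ) : ℤ := ∏ i ∈ Finset.range k, f.derivative.eval ((F f)^[i] u)

lemma taylor_iter (k : ℕ) (u d : ℤ) :
    ∃ e : ℤ, (F f)^[k] (u + d) = (F f)^[k] u + DP f u k * d + e * d ^ 2 := by
  induction k with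
  | zero => exact ⟨0, by simp [DP]⟩
  | succ n ih =>
      obtain ⟨e, he⟩ := ih
      set B := (F f)^[n] u with hB
      set P := DP f u n with hP
      obtain ⟨k₂, hk₂⟩ := f.binomExpansion B (P * d + e * d ^ 2)
      refine ⟨f.derivative.eval B * e + k₂ * (P + e * d) ^ 2, ?_⟩
      have hDP : DP f u (n + 1) = P * f.derivative.eval B := by
        rw [hP, DP, DP, Finset.prod_range_succ, hB]
      rw [Function.iterate_succ_apply', Function.iterate_succ_apply', he, hDP]
      show f.eval (B + P * d + e * d ^ 2) =
        f.eval B + P * f.derivative.eval B * d + _ * d ^ 2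
      have h3 : B + P * d + e * d ^ 2 = B + (P * d + e * d ^ 2) := by ring
      rw [h3, hk₂]
      ring

/-- `Per M s ℓ` : from index `s` on, `ℓ` is a period of the orbit modulo `M`. -/
def Per (M : ℤ) (s ℓ : ℕ) : Prop := ∀ x ≥ s, M ∣ It f a (x + ℓ) - It f a x

lemma Per.mul {M : ℤ} {s ℓ : ℕ} (h : Per f a M s ℓ) (k : ℕ) :
    ∀ x ≥ s, M ∣ It f a (x + k * ℓ) - It f a x := by
  intro x hx
  induction k with
  | zero => simp
  | succ n ih =>
      have h1 : M ∣ It f a (x + n * ℓ + ℓ) - It f a (x + n * ℓ) :=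
        h _ (le_trans hx (Nat.le_add_right _ _))
      have : x + (n+1) * ℓ = x + n * ℓ + ℓ := by ring
      rw [this]
      have := dvd_add h1 ih
      simpa using this

lemma Per.sub {M : ℤ} {s ℓ : ℕ} (h : Per f a M s ℓ) {x y : ℕ} (hy : y ≥ s)
    (hxy : y ≤ x) (hdvd : (ℓ : ℤ) ∣ (x : ℤ) - y) (hℓ : 0 < ℓ) :
    M ∣ It f a x - It f a y := by
  obtain ⟨k, hk⟩ : ∃ k : ℕ, x = y + k * ℓ := by
    obtain ⟨c, hc⟩ := hdvd
    have hc0 : 0 ≤ c := by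
      nlinarith [hc, Int.ofNat_le.2 hxy]
    refine ⟨c.toNat, ?_⟩
    have : (x : ℤ) = y + c.toNat * ℓ := by
      rw [Int.toNat_of_nonneg hc0]; linarith
    exact_mod_cast this
  subst hk
  exact Per.mul f a h k y hy

/-- derivative values along the orbit, in `ZMod p` -/
def dI (p : ℕ) (y : ℕ) : ZMod p := ((f.derivative.eval (It f a y) : ℤ) : ZMod p)

/-- the multiplier -/
def mbar (p s ℓ : ℕ) : ZMod p := ((DP f (It f a s) ℓ : ℤ) : ZMod p)

open scoped Classical in
def tord (p s ℓ : ℕ) : ℕ := if mbar f a p s ℓ = 0 then 1 else orderOf (mbar f a p s ℓ)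

section PrimeData

variable (p : ℕ) [Fact p.Prime] (s ℓ : ℕ) (hℓ : 0 < ℓ)
variable (hPer : Per f a (p : ℤ) s ℓ)

lemma DP_cast_eq_prod (x k : ℕ) :
    ((DP f (It f a x) k : ℤ) : ZMod p) = ∏ i ∈ Finset.range k, dI f a p (x + i) := by
  rw [DP, Int.cast_prod]
  refine Finset.prod_congr rfl ?_
  intro i _
  rw [dI, It_add]

include hℓ hPer

lemma dI_shift {x : ℕ} (hx : s ≤ x) : dI f a p (x + ℓ) = dI f a p x := by
  have h1 : (p : ℤ) ∣ It f a (x + ℓ) - It f a x := hPer x hx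
  have h2 : (p : ℤ) ∣ f.derivative.eval (It f a (x + ℓ)) - f.derivative.eval (It f a x) :=
    dvd_trans h1 (sub_dvd_eval_sub _ _ _)
  have := (ZMod.intCast_zmod_eq_zero_iff_dvd _ p).2 h2
  rw [Int.cast_sub] at this
  rw [dI, dI]
  exact sub_eq_zero.mp this

lemma block_eq {x : ℕ} (hx : s ≤ x) :
    (∏ i ∈ Finset.range ℓ, dI f a p (x + i)) = mbar f a p s ℓ := by
  induction x with
  | zero =>
      have : s = 0 := Nat.le_zero.mp hx
      subst this
      rw [mbar, DP_cast_eq_prod]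
  | succ n ih =>
      rcases Nat.lt_or_ge n s with h | h
      · have : s = n + 1 := by omega
        subst this
        rw [mbar, DP_cast_eq_prod]
      · have key : (∏ i ∈ Finset.range ℓ, dI f a p (n + 1 + i)) * dI f a p n
            = (∏ i ∈ Finset.range ℓ, dI f a p (n + i)) * dI f a p (n + ℓ) := by
          have e1 : (∏ i ∈ Finset.range (ℓ + 1), dI f a p (n + i))
              = (∏ i ∈ Finset.range ℓ, dI f a p (n + (i + 1))) * dI f a p (n + 0) :=
            Finset.prod_range_succ' (fun i => dI f a p (n + i)) ℓ
          have e2 : (∏ i ∈ Finset.range (ℓ + 1), dI f a p (n + i))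
              = (∏ i ∈ Finset.range ℓ, dI f a p (n + i)) * dI f a p (n + ℓ) :=
            Finset.prod_range_succ _ _
          rw [← e2, e1]
          simp only [Nat.add_zero]
          congr 1
          refine Finset.prod_congr rfl ?_
          intro i _
          congr 1
          omega
        have hshift : dI f a p (n + ℓ) = dI f a p n := dI_shift f a p s ℓ hℓ hPer h
        rw [hshift] at key
        by_cases hc : dI f a p n = 0
        · have hmem : ℓ - 1 ∈ Finset.range ℓ := Finset.mem_range.2 (by omega)
          have hval : dI f a p (n + 1 + (ℓ - 1)) = 0 := by
            have hh : n + 1 + (ℓ - 1) = n + ℓ := by omega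
            rw [hh, hshift, hc]
          have hz1 : (∏ i ∈ Finset.range ℓ, dI f a p (n + 1 + i)) = 0 :=
            Finset.prod_eq_zero hmem hval
          have hz2 : (∏ i ∈ Finset.range ℓ, dI f a p (n + i)) = 0 :=
            Finset.prod_eq_zero (Finset.mem_range.2 hℓ) (by rw [Nat.add_zero, hc])
          rw [hz1, ← ih h, hz2]
        · have := mul_right_cancel₀ hc key
          rw [this]
          exact ih h

lemma DP_pow {x : ℕ} (hx : s ≤ x) (k : ℕ) :
    ((DP f (It f a x) (k * ℓ) : ℤ) : ZMod p) = (mbar f a p s ℓ) ^ k := by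
  induction k with
  | zero => simp [DP]
  | succ n ih =>
      have hsplit : DP f (It f a x) (n * ℓ + ℓ)
          = DP f (It f a x) (n * ℓ) * DP f ((F f)^[n * ℓ] (It f a x)) ℓ := by
        rw [DP, DP, DP, Finset.prod_range_add]
        congr 1
        refine Finset.prod_congr rfl ?_
        intro i _
        rw [Nat.add_comm (n * ℓ) i, Function.iterate_add_apply]
      have h2 : ((DP f ((F f)^[n * ℓ] (It f a x)) ℓ : ℤ) : ZMod p) = mbar f a p s ℓ := by
        rw [← It_add]
        rw [DP_cast_eq_prod]
        exact block_eq f a p s ℓ hℓ hPer (le_trans hx (Nat.le_add_right _ _))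
      have : (n + 1) * ℓ = n * ℓ + ℓ := by ring
      rw [this, hsplit, Int.cast_mul, ih, h2, pow_succ]

omit hℓ hPer

lemma tord_pos : 0 < tord f a p s ℓ := by
  rw [tord]
  split
  · exact Nat.one_pos
  · next h =>
    have hfin : IsOfFinOrder (mbar f a p s ℓ) := by
      refine isOfFinOrder_iff_pow_eq_one.2 ⟨p - 1, ?_, ZMod.pow_card_sub_one_eq_one h⟩
      have := (Fact.out : p.Prime).two_le
      omega
    exact hfin.orderOf_pos

lemma tord_dvd : tord f a p s ℓ ∣ p - 1 := by
  rw [tord]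
  split
  · exact one_dvd _
  · next h => exact orderOf_dvd_of_pow_eq_one (ZMod.pow_card_sub_one_eq_one h)

include hℓ hPer

/-- Case A: the key uniform-transient period lemma. -/
lemma keyA (hm : mbar f a p s ℓ ≠ 0) :
    ∀ n : ℕ, 1 ≤ n → Per f a ((p : ℤ) ^ n) s (p ^ (n - 1) * (ℓ * tord f a p s ℓ)) := by
  have hm1 : (mbar f a p s ℓ) ^ (tord f a p s ℓ) = 1 := by
    rw [tord, if_neg hm]
    exact pow_orderOf_eq_one _
  -- strengthened statement with floor `s`
  intro n hn
  induction n with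
  | zero => omega
  | succ m ihm =>
      rcases Nat.eq_or_lt_of_le hn with h1 | h1
      · -- n = 1
        have : m = 0 := by omega
        subst this
        intro x hx
        have : p ^ (1 - 1) * (ℓ * tord f a p s ℓ) = tord f a p s ℓ * ℓ := by ring
        rw [this, pow_one]
        exact Per.mul f a hPer _ x hx
      · have hm1le : 1 ≤ m := by omega
        have IH : Per f a ((p : ℤ) ^ m) s (p ^ (m - 1) * (ℓ * tord f a p s ℓ)) := ihm hm1le
        set M := p ^ (m - 1) * (ℓ * tord f a p s ℓ) with hM
        intro x hx
        -- goal : p^(m+1) ∣ It (x + p^m * (ℓ*t)) - It x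
        have hMsucc : p ^ (m + 1 - 1) * (ℓ * tord f a p s ℓ) = p * M := by
          rw [hM]
          have : m + 1 - 1 = (m - 1) + 1 := by omega
          rw [this, pow_succ]
          ring
        rw [hMsucc]
        -- telescoping
        have hTj : ∀ j : ℕ, ((p : ℤ) ^ (m + 1)) ∣
            (It f a (x + (j + 1) * M) - It f a (x + j * M))
              - (It f a (x + M) - It f a x) := by
          intro j
          have hδ : ((p : ℤ) ^ m) ∣ It f a (x + j * M) - It f a x := Per.mul f a IH j x hx
          set y0 := It f a x with hy0
          set δ := It f a (x + j * M) - It f a x with hδdef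
          obtain ⟨e, he⟩ := taylor_iter f (M) y0 δ
          have hIt1 : It f a (x + (j + 1) * M) = (F f)^[M] (y0 + δ) := by
            have h1 : x + (j + 1) * M = (x + j * M) + M := by ring
            rw [h1, It_add]
            congr 1
            rw [hδdef, hy0]; ring
          have hIt2 : It f a (x + M) = (F f)^[M] y0 := by rw [It_add]
          rw [hIt1, hIt2, he]
          have hDP1 : ((p : ℤ)) ∣ DP f y0 M - 1 := by
            have hcast : ((DP f y0 M : ℤ) : ZMod p) = 1 := by
              have hMeq : M = (p ^ (m - 1) * tord f a p s ℓ) * ℓ := by rw [hM]; ring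
              rw [hy0, hMeq, DP_pow f a p s ℓ hℓ hPer hx]
              rw [pow_mul', hm1, one_pow]
            have : (((DP f y0 M - 1 : ℤ)) : ZMod p) = 0 := by push_cast [hcast]; ring
            exact (ZMod.intCast_zmod_eq_zero_iff_dvd _ p).1 this
          have hd1 : ((p : ℤ) ^ (m + 1)) ∣ (DP f y0 M - 1) * δ := by
            rw [pow_succ']
            exact mul_dvd_mul hDP1 hδ
          have hd2 : ((p : ℤ) ^ (m + 1)) ∣ e * δ ^ 2 := by
            refine Dvd.dvd.mul_left ?_ e
            have : ((p : ℤ) ^ m) * ((p : ℤ) ^ m) ∣ δ ^ 2 := by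
              rw [sq]; exact mul_dvd_mul hδ hδ
            refine dvd_trans ?_ this
            rw [← pow_add]
            exact pow_dvd_pow _ (by omega)
          have goal_eq : (F f)^[M] y0 + DP f y0 M * δ + e * δ ^ 2 - It f a (x + j * M)
              - ((F f)^[M] y0 - y0) = (DP f y0 M - 1) * δ + e * δ ^ 2 := by
            rw [hδdef, hy0]; ring
          rw [goal_eq]
          exact dvd_add hd1 hd2
        -- sum over j < p
        have hsum : ∀ J : ℕ, It f a (x + J * M) - It f a x
            = ∑ j ∈ Finset.range J, (It f a (x + (j + 1) * M) - It f a (x + j * M)) := by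
          intro J
          induction J with
          | zero => simp
          | succ K ihK =>
              rw [Finset.sum_range_succ, ← ihK]
              ring
        have hx0 : ((p : ℤ) ^ (m + 1)) ∣ (p : ℤ) * (It f a (x + M) - It f a x) := by
          rw [pow_succ']
          exact mul_dvd_mul_left _ (by simpa using IH x hx)
        have hfinal : It f a (x + p * M) - It f a x
            = (p : ℤ) * (It f a (x + M) - It f a x)
              + ∑ j ∈ Finset.range p, ((It f a (x + (j + 1) * M) - It f a (x + j * M))
                - (It f a (x + M) - It f a x)) := by
          rw [Finset.sum_sub_distrib, Finset.sum_const, Finset.card_range]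
          rw [← hsum p]
          push_cast
          ring
        rw [hfinal]
        exact dvd_add hx0 (Finset.dvd_sum (fun j _ => hTj j))

/-- Case B (superattracting): period `ℓ` persists with linearly growing transient. -/
lemma keyB_step (hm : mbar f a p s ℓ = 0) :
    ∀ n : ℕ, 1 ≤ n → Per f a ((p : ℤ) ^ n) (s + ℓ * (n - 1)) ℓ := by
  intro n hn
  induction n with
  | zero => omega
  | succ m ihm =>
      rcases Nat.eq_or_lt_of_le hn with h1 | h1
      · have : m = 0 := by omega
        subst this
        simpa using hPer
      · have hm1le : 1 ≤ m := by omega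
        have IH := ihm hm1le
        intro x hx
        have hxm : x ≥ s + ℓ * m := by
          have h2 : m + 1 - 1 = m := by omega
          rwa [h2] at hx
        have hxℓ : ℓ ≤ x := by
          have h3 : ℓ * 1 ≤ ℓ * m := Nat.mul_le_mul_left _ hm1le
          have h4 : ℓ * 1 = ℓ := by ring
          omega
        have hx' : x - ℓ ≥ s + ℓ * (m - 1) := by
          have h5 : m - 1 + 1 = m := by omega
          have h2 : ℓ * (m - 1) + ℓ = ℓ * m := by
            calc ℓ * (m - 1) + ℓ = ℓ * (m - 1 + 1) := by ring
            _ = ℓ * m := by rw [h5]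
          omega
        set u' := It f a (x - ℓ) with hu'
        set d := It f a x - It f a (x - ℓ) with hd
        have hdvd_d : ((p : ℤ) ^ m) ∣ d := by
          have := IH (x - ℓ) hx'
          rw [hd]
          have hxx : x - ℓ + ℓ = x := by omega
          rwa [hxx] at this
        obtain ⟨e, he⟩ := taylor_iter f ℓ u' d
        have hItx : It f a x = u' + d := by rw [hd, hu']; ring
        have hIt2 : It f a (x + ℓ) = (F f)^[ℓ] (It f a x) := It_add f a x ℓ
        have hIt3 : It f a x = (F f)^[ℓ] u' := by
          rw [hu', ← It_add]
          congr 1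
          omega
        have hDP0 : ((p : ℤ)) ∣ DP f u' ℓ := by
          have hcast : ((DP f u' ℓ : ℤ) : ZMod p) = 0 := by
            rw [hu', DP_cast_eq_prod, block_eq f a p s ℓ hℓ hPer (by omega), hm]
          exact (ZMod.intCast_zmod_eq_zero_iff_dvd _ p).1 hcast
        have key : It f a (x + ℓ) - It f a x = DP f u' ℓ * d + e * d ^ 2 := by
          rw [hIt2, hItx, he, ← hIt3, hItx]
          ring
        rw [key]
        have hd1 : ((p : ℤ) ^ (m + 1)) ∣ DP f u' ℓ * d := by
          rw [pow_succ']
          exact mul_dvd_mul hDP0 hdvd_d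
        have hd2 : ((p : ℤ) ^ (m + 1)) ∣ e * d ^ 2 := by
          refine Dvd.dvd.mul_left ?_ e
          have h2 : ((p : ℤ) ^ m) * ((p : ℤ) ^ m) ∣ d ^ 2 := by
            rw [sq]; exact mul_dvd_mul hdvd_d hdvd_d
          refine dvd_trans ?_ h2
          rw [← pow_add]
          exact pow_dvd_pow _ (by omega)
        exact dvd_add hd1 hd2

/-- the unified key period lemma, with floor `s + ℓ*n`. -/
lemma keyPer : ∀ n : ℕ, 1 ≤ n →
    Per f a ((p : ℤ) ^ n) (s + ℓ * n) (p ^ (n - 1) * (ℓ * tord f a p s ℓ)) := by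
  intro n hn
  by_cases hm : mbar f a p s ℓ = 0
  · intro x hx
    have hstep := keyB_step f a p s ℓ hℓ hPer hm n hn
    have hx' : x ≥ s + ℓ * (n - 1) := by
      have : ℓ * (n - 1) ≤ ℓ * n := Nat.mul_le_mul_left _ (by omega)
      omega
    have := Per.mul f a hstep (p ^ (n - 1) * tord f a p s ℓ) x hx'
    have harith : p ^ (n - 1) * tord f a p s ℓ * ℓ = p ^ (n - 1) * (ℓ * tord f a p s ℓ) := by
      ring
    rwa [harith] at this
  · intro x hx
    exact keyA f a p s ℓ hℓ hPer hm n hn x (by omega)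

/-- in the superattracting case, `ℓ` itself is a period mod `p^n` (with the same floor). -/
lemma keyPerB (hm : mbar f a p s ℓ = 0) : ∀ n : ℕ, 1 ≤ n →
    Per f a ((p : ℤ) ^ n) (s + ℓ * n) ℓ := by
  intro n hn x hx
  refine keyB_step f a p s ℓ hℓ hPer hm n hn x ?_
  have : ℓ * (n - 1) ≤ ℓ * n := Nat.mul_le_mul_left _ (by omega)
  omega

end PrimeData

lemma per_of_cast_eq {M : ℕ} {i j : ℕ} (hij : i < j)
    (h : ((It f a i : ℤ) : ZMod M) = ((It f a j : ℤ) : ZMod M)) :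
    Per f a (M : ℤ) i (j - i) := by
  have base : (M : ℤ) ∣ It f a j - It f a i := by
    have h0 : ((It f a j - It f a i : ℤ) : ZMod M) = 0 := by
      push_cast
      rw [h]; ring
    exact (ZMod.intCast_zmod_eq_zero_iff_dvd _ M).1 h0
  intro x hx
  have h1 : (M : ℤ) ∣ It f a (j + (x - i)) - It f a (i + (x - i)) := It_dvd_of_dvd f a base
  have h2 : i + (x - i) = x := by omega
  have h3 : j + (x - i) = x + (j - i) := by omega
  rw [h2, h3] at h1
  exact h1

lemma exists_per (M : ℕ) (hM : 0 < M) : ∃ ℓ : ℕ, 0 < ℓ ∧ ∃ s, Per f a (M : ℤ) s ℓ := by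
  haveI : NeZero M := ⟨by omega⟩
  have hcard : Fintype.card (ZMod M) < Fintype.card (Fin (M + 1)) := by
    simp [ZMod.card]
  obtain ⟨i, j, hne, heq⟩ := Fintype.exists_ne_map_eq_of_card_lt
    (fun i : Fin (M + 1) => ((It f a i : ℤ) : ZMod M)) hcard
  rcases Nat.lt_or_ge i.val j.val with h | h
  · exact ⟨j.val - i.val, by omega, i.val, per_of_cast_eq f a h heq⟩
  · have h' : j.val < i.val := by
      rcases Nat.lt_or_ge j.val i.val with h2 | h2
      · exact h2
      · exact absurd (Fin.ext (by omega)) hne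
    exact ⟨i.val - j.val, by omega, j.val, per_of_cast_eq f a h' heq.symm⟩

open scoped Classical in
def lmin (M : ℕ) : ℕ :=
  if h : ∃ ℓ : ℕ, 0 < ℓ ∧ ∃ s, Per f a (M : ℤ) s ℓ then Nat.find h else 1

variable {M : ℕ}

open scoped Classical in
lemma lmin_spec (hM : 0 < M) : 0 < lmin f a M ∧ ∃ s, Per f a (M : ℤ) s (lmin f a M) := by
  have h := exists_per f a M hM
  rw [lmin, dif_pos h]
  exact Nat.find_spec h

open scoped Classical in
lemma lmin_min (hM : 0 < M) {ℓ' : ℕ} (h1 : 0 < ℓ') {s : ℕ} (h2 : Per f a (M : ℤ) s ℓ') :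
    lmin f a M ≤ ℓ' := by
  have h := exists_per f a M hM
  rw [lmin, dif_pos h]
  exact Nat.find_min' h ⟨h1, s, h2⟩

lemma lmin_dvd (hM : 0 < M) {ℓ' : ℕ} (h1 : 0 < ℓ') {s : ℕ} (h2 : Per f a (M : ℤ) s ℓ') :
    lmin f a M ∣ ℓ' := by
  obtain ⟨hpos, s₁, per₁⟩ := lmin_spec f a hM
  set ℓ := lmin f a M with hℓ
  set g := Nat.gcd ℓ ℓ' with hg
  have hgpos : 0 < g := Nat.gcd_pos_of_pos_left _ hpos
  -- Bezout with positivity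
  obtain ⟨u, v, hu, huv⟩ : ∃ u v : ℕ, 0 < u ∧ u * ℓ = g + v * ℓ' := by
    set A := Nat.gcdA ℓ ℓ' with hA
    set B := Nat.gcdB ℓ ℓ' with hB
    have hbez : (g : ℤ) = ℓ * A + ℓ' * B := Nat.gcd_eq_gcd_ab ℓ ℓ'
    set k : ℤ := |A| + |B| + 1 with hk
    have hkpos : 0 < k := by positivity
    set u' : ℤ := A + k * ℓ' with hu'
    set v' : ℤ := k * ℓ - B with hv'
    have hℓ'1 : (1 : ℤ) ≤ ℓ' := by exact_mod_cast h1
    have hℓ1 : (1 : ℤ) ≤ ℓ := by exact_mod_cast hpos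
    have hu'pos : 0 < u' := by
      have : k ≤ k * ℓ' := le_mul_of_one_le_right (le_of_lt hkpos) hℓ'1
      have hA1 : -|A| ≤ A := neg_abs_le A
      rw [hu']; nlinarith [abs_nonneg A, abs_nonneg B]
    have hv'pos : 0 < v' := by
      have : k ≤ k * ℓ := le_mul_of_one_le_right (le_of_lt hkpos) hℓ1
      have hB1 : B ≤ |B| := le_abs_self B
      rw [hv']; nlinarith [abs_nonneg A, abs_nonneg B]
    have hiden : u' * ℓ = g + v' * ℓ' := by
      rw [hu', hv']
      linear_combination -hbez
    refine ⟨u'.toNat, v'.toNat, by omega, ?_⟩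
    have h1' : (u'.toNat : ℤ) = u' := Int.toNat_of_nonneg (le_of_lt hu'pos)
    have h2' : (v'.toNat : ℤ) = v' := Int.toNat_of_nonneg (le_of_lt hv'pos)
    have : (u'.toNat * ℓ : ℤ) = (g : ℤ) + v'.toNat * ℓ' := by
      rw [h1', h2']; exact hiden
    exact_mod_cast this
  -- g is a period from s₁ + s₂
  have hPerg : Per f a (M : ℤ) (s₁ + s) g := by
    intro x hx
    have hA1 : (M : ℤ) ∣ It f a ((x + g) + v * ℓ') - It f a (x + g) :=
      Per.mul f a h2 v _ (by omega)
    have hA2 : (M : ℤ) ∣ It f a (x + u * ℓ) - It f a x :=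
      Per.mul f a per₁ u x (by omega)
    have harith : (x + g) + v * ℓ' = x + u * ℓ := by omega
    rw [harith] at hA1
    have := dvd_sub hA2 hA1
    simpa using this
  have hle : ℓ ≤ g := lmin_min f a hM hgpos hPerg
  have hge : g ≤ ℓ := Nat.le_of_dvd hpos (Nat.gcd_dvd_left _ _)
  have : g = ℓ := le_antisymm hge hle
  rw [← this, hg]
  exact Nat.gcd_dvd_right _ _

-- cast-commutation with the reduction map
lemma polyRed_cast (m : ℕ) (z : ℤ) :
    polyRed f m ((z : ℤ) : ZMod m) = ((f.eval z : ℤ) : ZMod m) := by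
  have h1 : ((z : ℤ) : ZMod m) = (Int.castRingHom (ZMod m)) z := rfl
  rw [polyRed, h1, Polynomial.eval₂_at_apply]
  rfl

lemma map_iterate_cast (m : ℕ) (x : ℕ) :
    (polyRed f m)^[x] (((a : ℤ) : ZMod m)) = ((It f a x : ℤ) : ZMod m) := by
  induction x with
  | zero => rfl
  | succ n ih =>
      rw [Function.iterate_succ_apply', ih]
      have : It f a (n + 1) = f.eval (It f a n) := by
        rw [It, Function.iterate_succ_apply']
        rfl
      rw [this, polyRed_cast]

lemma lambda_is_per (p : ℕ) (hp : 0 < p) :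
    0 < polyLambda f p ∧ ∃ s, Per f a (p : ℤ) s (polyLambda f p) := by
  set σ := polyRed f p with hσ
  have hne : {L : ℕ | 0 < L ∧ ∃ K : ℕ, σ^[K + L] = σ^[K]}.Nonempty := by
    haveI : NeZero p := ⟨by omega⟩
    have hcard : Fintype.card (ZMod p → ZMod p) <
        Fintype.card (Fin (Fintype.card (ZMod p → ZMod p) + 1)) := by
      simp
    obtain ⟨i, j, hne, heq⟩ := Fintype.exists_ne_map_eq_of_card_lt
      (fun i : Fin (Fintype.card (ZMod p → ZMod p) + 1) => σ^[i.val]) hcard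
    rcases Nat.lt_or_ge i.val j.val with h | h
    · refine ⟨j.val - i.val, by omega, i.val, ?_⟩
      have : i.val + (j.val - i.val) = j.val := by omega
      rw [this]; exact heq.symm
    · have h' : j.val < i.val := by
        rcases Nat.lt_or_ge j.val i.val with h2 | h2
        · exact h2
        · exact absurd (Fin.ext (by omega)) hne
      refine ⟨i.val - j.val, by omega, j.val, ?_⟩
      have : j.val + (i.val - j.val) = i.val := by omega
      rw [this]; exact heq
  have hmem := Nat.sInf_mem hne
  obtain ⟨hLpos, K, hK⟩ := hmem
  refine ⟨hLpos, K, ?_⟩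
  intro x hx
  set L := polyLambda f p with hL
  have hcast : ((It f a (x + L) : ℤ) : ZMod p) = ((It f a x : ℤ) : ZMod p) := by
    rw [← map_iterate_cast, ← map_iterate_cast]
    have h1 : x + L = (x - K) + (K + L) := by omega
    have h2 : x = (x - K) + K := by omega
    rw [h1, Function.iterate_add_apply]
    have hK' : σ^[K + L] = σ^[K] := hK
    calc σ^[x - K] (σ^[K + L] ((a : ℤ) : ZMod p)) = σ^[x - K] (σ^[K] ((a : ℤ) : ZMod p)) := by
          rw [hK']
    _ = σ^[(x - K) + K] ((a : ℤ) : ZMod p) := by rw [Function.iterate_add_apply]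
    _ = σ^[x] ((a : ℤ) : ZMod p) := by rw [← h2]
  have h0 : ((It f a (x + L) - It f a x : ℤ) : ZMod p) = 0 := by
    push_cast
    rw [hcast]; ring
  exact (ZMod.intCast_zmod_eq_zero_iff_dvd _ p).1 h0

lemma lmin_dvd_lambda (p : ℕ) (hp : 0 < p) : lmin f a p ∣ polyLambda f p := by
  obtain ⟨h1, s, h2⟩ := lambda_is_per f a p hp
  exact lmin_dvd f a hp h1 h2

-- distinctness of the cycle values
lemma cycle_distinct (p : ℕ) (hp : 0 < p) {s : ℕ} (hPer : Per f a (p : ℤ) s (lmin f a p))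
    {i j : ℕ} (hi : i < j) (hj : j < lmin f a p)
    (heq : ((It f a (s + i) : ℤ) : ZMod p) = ((It f a (s + j) : ℤ) : ZMod p)) : False := by
  have hper' : Per f a (p : ℤ) (s + i) ((s + j) - (s + i)) :=
    per_of_cast_eq f a (by omega) heq
  have := lmin_min f a hp (ℓ' := (s + j) - (s + i)) (by omega) hper'
  omega

lemma lmin_le_p (p : ℕ) (hp : 0 < p) {s : ℕ}
    (hPer : Per f a (p : ℤ) s (lmin f a p)) : lmin f a p ≤ p := by
  haveI : NeZero p := ⟨by omega⟩
  have hinj : Function.Injective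
      (fun i : Fin (lmin f a p) => ((It f a (s + i.val) : ℤ) : ZMod p)) := by
    intro i j hij
    by_contra hne
    rcases Nat.lt_or_ge i.val j.val with h | h
    · exact cycle_distinct f a p hp hPer h j.isLt hij
    · have h' : j.val < i.val := by
        rcases Nat.lt_or_ge j.val i.val with h2 | h2
        · exact h2
        · exact absurd (Fin.ext (by omega)) (fun hcc => hne hcc)
      exact cycle_distinct f a p hp hPer h' i.isLt hij.symm
  have := Fintype.card_le_of_injective _ hinj
  simpa [ZMod.card] using this

lemma cyclic_of_lmin_eq (p : ℕ) (hp : p.Prime) {s : ℕ}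
    (hPer : Per f a (p : ℤ) s (lmin f a p)) (hpe : lmin f a p = p) :
    IsCyclicPermOfLength (polyRed f p) p := by
  haveI : NeZero p := ⟨hp.ne_zero⟩
  set σ := polyRed f p with hσ
  set g : Fin p → ZMod p := fun i => ((It f a (s + i.val) : ℤ) : ZMod p) with hgdef
  have hinj : Function.Injective g := by
    intro i j hij
    by_contra hne
    rcases Nat.lt_or_ge i.val j.val with h | h
    · exact cycle_distinct f a p (hp.pos) hPer h (by omega) hij
    · have h' : j.val < i.val := by
        rcases Nat.lt_or_ge j.val i.val with h2 | h2
        · exact h2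
        · exact absurd (Fin.ext (by omega)) (fun hcc => hne hcc)
      exact cycle_distinct f a p (hp.pos) hPer h' (by omega) hij.symm
  have hbij : Function.Bijective g := by
    rw [Fintype.bijective_iff_injective_and_card]
    exact ⟨hinj, by simp [ZMod.card]⟩
  have hstep : ∀ y : ℕ, σ (((It f a y : ℤ) : ZMod p)) = ((It f a (y + 1) : ℤ) : ZMod p) := by
    intro y
    have h2 : It f a (y + 1) = f.eval (It f a y) := by
      rw [It, Function.iterate_succ_apply']; rfl
    rw [h2, hσ, polyRed_cast]
  have hiter : ∀ k : ℕ, σ^[k] ((It f a s : ℤ) : ZMod p) = ((It f a (s + k) : ℤ) : ZMod p) := by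
    intro k
    induction k with
    | zero => rfl
    | succ n ih =>
        rw [Function.iterate_succ_apply', ih, hstep]
        norm_num [Nat.add_assoc]
  constructor
  · -- σ is bijective : surjectivity
    have hsurj : Function.Surjective σ := by
      intro y
      obtain ⟨i, hi⟩ := hbij.2 y
      rcases Nat.eq_zero_or_pos i.val with h0 | h0
      · -- y = It s ; use period
        refine ⟨((It f a (s + (p - 1)) : ℤ) : ZMod p), ?_⟩
        rw [hstep]
        have hps : s + (p - 1) + 1 = s + 1 * lmin f a p + 0 := by
          rw [hpe]; have := hp.two_le; omega
        rw [hps]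
        have hdvd := Per.mul f a hPer 1 s (le_refl s)
        have hcast : ((It f a (s + 1 * lmin f a p) : ℤ) : ZMod p)
            = ((It f a s : ℤ) : ZMod p) := by
          have h0' : ((It f a (s + 1 * lmin f a p) - It f a s : ℤ) : ZMod p) = 0 :=
            (ZMod.intCast_zmod_eq_zero_iff_dvd _ p).2 hdvd
          push_cast at h0'
          exact sub_eq_zero.mp h0'
        rw [Nat.add_zero, hcast, ← hi, hgdef]
        simp [h0]
      · refine ⟨((It f a (s + (i.val - 1)) : ℤ) : ZMod p), ?_⟩
        rw [hstep]
        have : s + (i.val - 1) + 1 = s + i.val := by omega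
        rw [this, ← hi, hgdef]
    exact Function.Surjective.bijective_of_finite hsurj
  · refine ⟨((It f a s : ℤ) : ZMod p), ?_⟩
    intro y
    obtain ⟨i, hi⟩ := hbij.2 y
    exact ⟨i.val, i.isLt, by rw [hiter, ← hi, hgdef]⟩

/-- product of prime powers over distinct primes divides -/
lemma nat_crt (n : ℕ) (s : Finset ℕ) (hpr : ∀ p ∈ s, p.Prime) (m : ℕ)
    (h : ∀ p ∈ s, p ^ n ∣ m) : (∏ p ∈ s, p ^ n) ∣ m := by
  induction s using Finset.induction with
  | empty => simpa using one_dvd m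
  | insert q s' hnotmem ih =>
      next =>
      rw [Finset.prod_insert hnotmem]
      have hq : q.Prime := hpr q (Finset.mem_insert_self q s')
      have hcop : Nat.Coprime (q ^ n) (∏ p ∈ s', p ^ n) := by
        refine Nat.Coprime.pow_left _ ?_
        refine Nat.Coprime.prod_right ?_
        intro p hp
        have hp' : p.Prime := hpr p (Finset.mem_insert_of_mem hp)
        refine Nat.Coprime.pow_right _ ?_
        rw [Nat.coprime_primes hq hp']
        rintro rfl
        exact hnotmem hp
      refine Nat.Coprime.mul_dvd_of_dvd_of_dvd hcop (h q (Finset.mem_insert_self q s')) ?_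
      exact ih (fun p hp => hpr p (Finset.mem_insert_of_mem hp))
        (fun p hp => h p (Finset.mem_insert_of_mem hp))

lemma int_crt (b n : ℕ) (hb : Squarefree b) (hb0 : 0 < b) (z : ℤ)
    (h : ∀ p ∈ b.primeFactors, ((p : ℤ) ^ n) ∣ z) : ((b : ℤ) ^ n) ∣ z := by
  have hprod : (∏ p ∈ b.primeFactors, p ^ n) = b ^ n := by
    rw [Finset.prod_pow, Nat.prod_primeFactors_of_squarefree hb]
  have hnat : (b ^ n) ∣ z.natAbs := by
    rw [← hprod]
    refine nat_crt n _ (fun p hp => Nat.prime_of_mem_primeFactors hp) _ ?_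
    intro p hp
    have h2 := h p hp
    have h3 : ((p ^ n : ℕ) : ℤ) ∣ z := by push_cast; exact h2
    exact Int.natCast_dvd.1 h3
  have h4 : ((b ^ n : ℕ) : ℤ) ∣ z := Int.natCast_dvd.2 hnat
  push_cast at h4
  exact h4

/-- a number all of whose prime factors divide `b` divides `b ^ m` -/
lemma divisor_pow (b m : ℕ) (hb : 2 ≤ b) (hm : 0 < m)
    (hfac : ∀ q : ℕ, q.Prime → q ∣ m → q ∣ b) : m ∣ b ^ m := by
  have hb0 : b ≠ 0 := by omega
  have hm0 : m ≠ 0 := by omega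
  rw [← Nat.factorization_le_iff_dvd hm0 (pow_ne_zero m hb0)]
  intro q
  rcases em q.Prime with hq | hq
  · rcases Nat.eq_zero_or_pos (m.factorization q) with h0 | h0
    · simp [h0]
    · have hqm : q ∣ m := Nat.dvd_of_factorization_pos (by omega)
      have hqb : q ∣ b := hfac q hq hqm
      have h1 : 1 ≤ b.factorization q := (Nat.Prime.factorization_pos_of_dvd hq hb0 hqb)
      have h2 : m.factorization q ≤ m := by
        have hdvd : q ^ (m.factorization q) ∣ m := Nat.ordProj_dvd m q
        have hle : q ^ (m.factorization q) ≤ m := Nat.le_of_dvd hm hdvd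
        have h2q : 2 ^ (m.factorization q) ≤ q ^ (m.factorization q) :=
          Nat.pow_le_pow_left hq.two_le _
        have := Nat.lt_two_pow_self (n := m.factorization q)
        omega
      rw [Nat.factorization_pow]
      simp only [Finsupp.smul_apply, smul_eq_mul]
      calc m.factorization q ≤ m := h2
      _ ≤ m * b.factorization q := by nlinarith
  · have : m.factorization q = 0 := by
      simp [Nat.factorization_eq_zero_of_not_prime _ hq]
    simp [this]

section Data

variable (b : ℕ) (hts : PolyTowerStable f) (hfb : FValid f b)

open scoped Classical in
def sp (p : ℕ) : ℕ :=
  if h : ∃ s, Per f a ((p : ℕ) : ℤ) s (lmin f a p) then Classical.choose h else 0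

/-- minimal orbit period mod p, shorthand -/
def Lp (p : ℕ) : ℕ := lmin f a p

/-- multiplier order -/
def tp (p : ℕ) : ℕ := tord f a p (sp f a p) (Lp f a p)

open scoped Classical in
def cp (p : ℕ) : ℕ := if mbar f a p (sp f a p) (Lp f a p) = 0 then Lp f a p else 0

variable {p : ℕ} (hp : p.Prime) (hpb : p ∣ b)

lemma Lp_pos (hp0 : 0 < p) : 0 < Lp f a p := (lmin_spec f a hp0).1

lemma sp_per (hp0 : 0 < p) : Per f a ((p : ℕ) : ℤ) (sp f a p) (Lp f a p) := by
  have h := (lmin_spec f a hp0).2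
  rw [sp, dif_pos h]
  exact Classical.choose_spec h

lemma Lp_lt (hp : p.Prime) (hts : PolyTowerStable f) : Lp f a p < p := by
  have h1 : Lp f a p ≤ p := lmin_le_p f a p hp.pos (sp_per f a hp.pos)
  rcases Nat.eq_or_lt_of_le h1 with h2 | h2
  · exact absurd (cyclic_of_lmin_eq f a p hp (sp_per f a hp.pos) h2) (hts p hp)
  · exact h2

lemma tp_pos (hp : p.Prime) : 0 < tp f a p := by
  haveI : Fact p.Prime := ⟨hp⟩
  exact tord_pos f a p _ _

lemma tp_dvd (hp : p.Prime) : tp f a p ∣ p - 1 := by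
  haveI : Fact p.Prime := ⟨hp⟩
  exact tord_dvd f a p _ _

/-- the key period lemma, packaged -/
lemma perKey (hp : p.Prime) : ∀ n : ℕ, 1 ≤ n →
    Per f a (((p : ℕ) : ℤ) ^ n) (sp f a p + cp f a p * n)
      (p ^ (n - 1) * (Lp f a p * tp f a p)) := by
  haveI : Fact p.Prime := ⟨hp⟩
  intro n hn
  rw [cp]
  split
  · next hm =>
      have := keyPer f a p (sp f a p) (Lp f a p) (Lp_pos f a hp.pos) (sp_per f a hp.pos) n hn
      exact this
  · next hm =>
      intro x hx
      exact keyA f a p (sp f a p) (Lp f a p) (Lp_pos f a hp.pos) (sp_per f a hp.pos) hm n hn x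
        (by omega)

/-- in the superattracting case, the short period `Lp` -/
lemma perKeyB (hp : p.Prime) (hc : cp f a p ≠ 0) : ∀ n : ℕ, 1 ≤ n →
    Per f a (((p : ℕ) : ℤ) ^ n) (sp f a p + cp f a p * n) (Lp f a p) := by
  haveI : Fact p.Prime := ⟨hp⟩
  have hm : mbar f a p (sp f a p) (Lp f a p) = 0 := by
    by_contra hm
    rw [cp, if_neg hm] at hc
    exact hc rfl
  intro n hn
  rw [cp, if_pos hm]
  exact keyPerB f a p (sp f a p) (Lp f a p) (Lp_pos f a hp.pos) (sp_per f a hp.pos) hm n hn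

lemma cp_le (hp0 : 0 < p) : cp f a p ≤ Lp f a p := by
  rw [cp]; split <;> omega

lemma fac_dvd_b (hp : p.Prime) (hpb : p ∣ b) (hfb : FValid f b) :
    ∀ q : ℕ, q.Prime → q ∣ Lp f a p * tp f a p → q ∣ b := by
  intro q hq hdvd
  rcases (Nat.Prime.dvd_mul hq).1 hdvd with h | h
  · have hlam : Lp f a p ∣ polyLambda f p := lmin_dvd_lambda f a p hp.pos
    exact hfb.2.2 p q hp hq hpb (dvd_trans h hlam)
  · have ht : tp f a p ∣ p - 1 := tp_dvd f a hp
    exact hfb.2.1 p q hp hq hpb (dvd_trans h ht)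

lemma fac_lt_p (hp : p.Prime) (hts : PolyTowerStable f) :
    ∀ q : ℕ, q.Prime → q ∣ Lp f a p * tp f a p → q < p := by
  intro q hq hdvd
  rcases (Nat.Prime.dvd_mul hq).1 hdvd with h | h
  · have h1 : q ≤ Lp f a p := Nat.le_of_dvd (Lp_pos f a hp.pos) h
    have := Lp_lt f a hp hts
    omega
  · have htpos : 0 < p - 1 := by have := hp.two_le; omega
    have h2 : tp f a p ≤ p - 1 := Nat.le_of_dvd htpos (tp_dvd f a hp)
    have h1 : q ≤ tp f a p := Nat.le_of_dvd (tp_pos f a hp) h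
    omega

lemma p_not_dvd (hp : p.Prime) (hts : PolyTowerStable f) :
    ¬ (p ∣ Lp f a p * tp f a p) := by
  intro h
  exact absurd (fac_lt_p f a hp hts p hp h) (lt_irrefl p)

lemma Lt_pos (hp : p.Prime) : 0 < Lp f a p * tp f a p :=
  Nat.mul_pos (Lp_pos f a hp.pos) (tp_pos f a hp)

end Data

section Main

variable (b : ℕ)

/-- the iterate-minus-index quantity -/
def G (x : ℕ) : ℤ := It f a x - (x : ℤ)

/-- a uniform floor above all the transients needed at level `n` -/
def FL (n : ℕ) : ℕ := ∑ p ∈ b.primeFactors, (sp f a p + Lp f a p * n)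

lemma FL_ge {p : ℕ} (hp : p ∈ b.primeFactors) {n' n : ℕ} (hn : n' ≤ n) :
    sp f a p + cp f a p * n' ≤ FL f a b n := by
  have h1 : sp f a p + cp f a p * n' ≤ sp f a p + Lp f a p * n := by
    have h2 : cp f a p ≤ Lp f a p := cp_le f a (Nat.prime_of_mem_primeFactors hp).pos
    have := Nat.mul_le_mul h2 hn
    omega
  refine le_trans h1 ?_
  exact Finset.single_le_sum (f := fun p => sp f a p + Lp f a p * n) (fun i _ => Nat.zero_le _) hp

lemma FL_mono {n n' : ℕ} (h : n ≤ n') : FL f a b n ≤ FL f a b n' := by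
  refine Finset.sum_le_sum ?_
  intro i _
  have := Nat.mul_le_mul_left (Lp f a i) h
  omega

variable (hts : PolyTowerStable f) (hfb : FValid f b)

lemma main_aux (hts : PolyTowerStable f) (hfb : FValid f b) :
    ∀ m : ℕ, ∀ n : ℕ, 1 ≤ n → ∀ x₀ : ℕ, ∃ x : ℕ,
    x₀ ≤ x ∧ FL f a b n ≤ x ∧ ∀ p ∈ b.primeFactors, p ≤ m → (((p : ℕ) : ℤ) ^ n) ∣ G f a x := by
  intro m
  induction m with
  | zero =>
      intro n hn x₀
      refine ⟨max x₀ (FL f a b n), le_max_left _ _, le_max_right _ _, ?_⟩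
      intro p hp hple
      have := (Nat.prime_of_mem_primeFactors hp).two_le
      omega
  | succ m ihm =>
      intro n hn x₀
      by_cases hpm : (m + 1) ∈ b.primeFactors
      · -- triangular step at the prime p := m + 1
        set p := m + 1 with hpdef
        have hp : p.Prime := Nat.prime_of_mem_primeFactors hpm
        haveI : Fact p.Prime := ⟨hp⟩
        have hppos : 0 < p := hp.pos
        -- the increment unit
        set T' : ℕ := (Lp f a p * tp f a p) *
          ∏ q ∈ b.primeFactors.filter (· ≤ m), (q ^ n * (Lp f a q * tp f a q)) with hT'
        have hT'pos : 0 < T' := by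
          rw [hT']
          refine Nat.mul_pos (Lt_pos f a hp) ?_
          refine Finset.prod_pos ?_
          intro q hq
          rw [Finset.mem_filter] at hq
          have hqp : q.Prime := Nat.prime_of_mem_primeFactors hq.1
          exact Nat.mul_pos (pow_pos hqp.pos n) (Lt_pos f a hqp)
        have hpT' : ¬ (p ∣ T') := by
          intro hdvd
          rcases (Nat.Prime.dvd_mul hp).1 hdvd with h | h
          · exact p_not_dvd f a hp hts h
          · rw [Prime.dvd_finset_prod_iff hp.prime] at h
            obtain ⟨q, hq, hdq⟩ := h
            rw [Finset.mem_filter] at hq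
            have hqp : q.Prime := Nat.prime_of_mem_primeFactors hq.1
            rcases (Nat.Prime.dvd_mul hp).1 hdq with h2 | h2
            · have := (Nat.prime_dvd_prime_iff_eq hp hqp).1 (hp.dvd_of_dvd_pow h2)
              omega
            · have := fac_lt_p f a hqp hts p hp h2
              omega
        -- inner induction on the p-level
        have inner : ∀ j : ℕ, j ≤ n → ∃ x : ℕ,
            x₀ ≤ x ∧ FL f a b n ≤ x ∧
            (∀ q ∈ b.primeFactors, q ≤ m → (((q : ℕ) : ℤ) ^ n) ∣ G f a x) ∧
            (((p : ℕ) : ℤ) ^ j) ∣ G f a x := by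
          intro j
          induction j with
          | zero =>
              intro _
              obtain ⟨x, hx0, hxF, hxq⟩ := ihm n hn x₀
              exact ⟨x, hx0, hxF, hxq, by simp⟩
          | succ k ihk =>
              intro hk1
              obtain ⟨x, hx0, hxF, hxq, hxp⟩ := ihk (by omega)
              -- choose τ
              obtain ⟨w, hw⟩ := hxp
              have hT'0 : ((T' : ℕ) : ZMod p) ≠ 0 := by
                intro h0
                exact hpT' ((ZMod.natCast_eq_zero_iff _ _).1 h0)
              set u : ZMod p := (w : ZMod p) * ((T' : ℕ) : ZMod p)⁻¹ with hu
              set τ : ℕ := u.val with hτ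
              set T : ℕ := p ^ k * T' with hT
              refine ⟨x + τ * T, by omega, by omega, ?_, ?_⟩
              · -- preservation at small primes
                intro q hq hqm
                have hqp : q.Prime := Nat.prime_of_mem_primeFactors hq
                haveI : Fact q.Prime := ⟨hqp⟩
                have hmem : q ∈ b.primeFactors.filter (· ≤ m) := by
                  rw [Finset.mem_filter]; exact ⟨hq, hqm⟩
                have hfac : (q ^ n * (Lp f a q * tp f a q)) ∣ T := by
                  rw [hT, hT']
                  exact Dvd.dvd.mul_left
                    (Dvd.dvd.mul_left (Finset.dvd_prod_of_mem _ hmem) _) _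
                have hqT : ((q : ℕ) : ℤ) ^ n ∣ ((τ * T : ℕ) : ℤ) := by
                  have h1 : q ^ n ∣ τ * T := Dvd.dvd.mul_left (dvd_trans ⟨_, rfl⟩ hfac) τ
                  exact_mod_cast Int.natCast_dvd_natCast.2 h1
                have hIt : ((q : ℕ) : ℤ) ^ n ∣ It f a (x + τ * T) - It f a x := by
                  have hper := perKey f a hqp n hn
                  refine Per.sub f a hper ?_ (Nat.le_add_right _ _) ?_ ?_
                  · exact le_trans (FL_ge f a b hq (le_refl n)) hxF
                  · have hdvd2 : (q ^ (n - 1) * (Lp f a q * tp f a q)) ∣ τ * T := by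
                      refine Dvd.dvd.mul_left ?_ τ
                      refine dvd_trans ?_ hfac
                      exact Nat.mul_dvd_mul_right (pow_dvd_pow q (by omega)) _
                    have := Int.natCast_dvd_natCast.2 hdvd2
                    push_cast at this ⊢
                    convert this using 1
                    ring
                  · have h1 : 0 < q ^ (n - 1) * (Lp f a q * tp f a q) :=
                      Nat.mul_pos (pow_pos hqp.pos _) (Lt_pos f a hqp)
                    exact h1
                have hGq := hxq q hq hqm
                rw [G] at hGq ⊢
                have : It f a (x + τ * T) - ((x + τ * T : ℕ) : ℤ)
                    = (It f a (x + τ * T) - It f a x) + (It f a x - (x : ℤ))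
                      - ((τ * T : ℕ) : ℤ) := by push_cast; ring
                rw [this]
                exact dvd_sub (dvd_add hIt hGq) hqT
              · -- the p-level increases
                have hIt : ((p : ℕ) : ℤ) ^ (k + 1) ∣ It f a (x + τ * T) - It f a x := by
                  have hper := perKey f a hp (k + 1) (by omega)
                  refine Per.sub f a hper ?_ (Nat.le_add_right _ _) ?_ ?_
                  · exact le_trans (FL_ge f a b hpm hk1) hxF
                  · have hdvd2 : (p ^ (k + 1 - 1) * (Lp f a p * tp f a p)) ∣ τ * T := by
                      refine Dvd.dvd.mul_left ?_ τ
                      rw [hT, hT']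
                      simp only [Nat.add_sub_cancel]
                      exact Nat.mul_dvd_mul_left _ (Dvd.intro _ rfl)
                    have := Int.natCast_dvd_natCast.2 hdvd2
                    push_cast at this ⊢
                    convert this using 1
                    ring
                  · exact Nat.mul_pos (pow_pos hp.pos _) (Lt_pos f a hp)
                have hkey : ((p : ℕ) : ℤ) ^ (k + 1) ∣ G f a x - ((τ * T : ℕ) : ℤ) := by
                  have hcast : ((w - τ * T' : ℤ) : ZMod p) = 0 := by
                    push_cast
                    have huval : ((τ : ℕ) : ZMod p) = u := ZMod.natCast_rightInverse u
                    rw [huval, hu]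
                    field_simp
                    simp
                  have hdvd3 : ((p : ℕ) : ℤ) ∣ (w - τ * T') :=
                    (ZMod.intCast_zmod_eq_zero_iff_dvd _ _).1 hcast
                  have : G f a x - ((τ * T : ℕ) : ℤ)
                      = ((p : ℕ) : ℤ) ^ k * (w - τ * T') := by
                    rw [hw, hT]
                    push_cast
                    ring
                  have hdvd4 : ((p : ℕ) : ℤ) ∣ w - (τ : ℤ) * (T' : ℤ) := by
                    push_cast at hdvd3
                    exact hdvd3
                  rw [this, pow_succ]
                  exact mul_dvd_mul_left _ hdvd4
                have : G f a (x + τ * T) = (It f a (x + τ * T) - It f a x)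
                    + (G f a x - ((τ * T : ℕ) : ℤ)) := by
                  rw [G, G]; push_cast; ring
                rw [this]
                exact dvd_add hIt hkey
        obtain ⟨x, hx0, hxF, hxq, hxp⟩ := inner n (le_refl n)
        refine ⟨x, hx0, hxF, ?_⟩
        intro q hq hqle
        rcases Nat.lt_or_ge q (m + 1) with h | h
        · exact hxq q hq (by omega)
        · have : q = p := by omega
          subst this
          exact hxp
      · -- m+1 is not a relevant prime
        obtain ⟨x, hx0, hxF, hxq⟩ := ihm n hn x₀
        refine ⟨x, hx0, hxF, ?_⟩
        intro q hq hqle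
        rcases Nat.lt_or_ge q (m + 1) with h | h
        · exact hxq q hq (by omega)
        · have : q = m + 1 := by omega
          rw [this] at hq
          exact absurd hq hpm

/-- MAIN LEMMA : witnesses at every depth -/
lemma witness (hb : 0 < b) (hts : PolyTowerStable f) (hfb : FValid f b)
    (n : ℕ) (hn : 1 ≤ n) (x₀ : ℕ) :
    ∃ x : ℕ, x₀ ≤ x ∧ FL f a b n ≤ x ∧
      ∀ p ∈ b.primeFactors, (((p : ℕ) : ℤ) ^ n) ∣ G f a x := by
  obtain ⟨x, h0, h1, h2⟩ := main_aux f a b hts hfb b n hn x₀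
  refine ⟨x, h0, h1, ?_⟩
  intro p hp
  exact h2 p hp (Nat.le_of_dvd (by omega) (Nat.dvd_of_mem_primeFactors hp))

end Main

section Extract

variable (b : ℕ) (hb : 0 < b) (hts : PolyTowerStable f) (hfb : FValid f b)

/-- a witness at depth `k+1` -/
def Wit (k : ℕ) : ℕ :=
  Classical.choose (witness f a b hb hts hfb (k + 1) (by omega) 0)

lemma Wit_spec (k : ℕ) : FL f a b (k + 1) ≤ Wit f a b hb hts hfb k ∧
    ∀ p ∈ b.primeFactors, (((p : ℕ) : ℤ) ^ (k + 1)) ∣ G f a (Wit f a b hb hts hfb k) := by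
  have h := Classical.choose_spec (witness f a b hb hts hfb (k + 1) (by omega) 0)
  exact ⟨h.2.1, h.2.2⟩

lemma exists_rho (m : ℕ) :
    ∃ v : ℕ, {k : ℕ | Wit f a b hb hts hfb k % b ^ m = v} ∈ Filter.hyperfilter ℕ := by
  set g : ℕ → ℕ := fun k => Wit f a b hb hts hfb k % b ^ m with hg
  have hbm : 0 < b ^ m := pow_pos hb m
  have hfin : (Set.range g).Finite := by
    refine Set.Finite.subset (Set.finite_Icc 0 (b ^ m)) ?_
    rintro v ⟨k, rfl⟩
    simp only [Set.mem_Icc]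
    exact ⟨Nat.zero_le _, le_of_lt (Nat.mod_lt _ hbm)⟩
  have hmem : Set.range g ∈ Ultrafilter.map g (Filter.hyperfilter ℕ) := by
    rw [Ultrafilter.mem_map]
    have : g ⁻¹' (Set.range g) = Set.univ := by
      ext k; simp [Set.mem_preimage, Set.mem_range]
    rw [this]
    exact Filter.univ_mem
  obtain ⟨v, hv, hpure⟩ := Ultrafilter.eq_pure_of_finite_mem hfin hmem
  refine ⟨v, ?_⟩
  have h2 : {v} ∈ Ultrafilter.map g (Filter.hyperfilter ℕ) := by
    rw [hpure]; exact Ultrafilter.mem_pure.2 rfl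
  rw [Ultrafilter.mem_map] at h2
  have h3 : g ⁻¹' {v} = {k : ℕ | g k = v} := by
    ext k; simp
  rwa [h3] at h2

/-- the coherent limiting residues -/
def rho (m : ℕ) : ℕ := Classical.choose (exists_rho f a b hb hts hfb m)

lemma rho_mem (m : ℕ) :
    {k : ℕ | Wit f a b hb hts hfb k % b ^ m = rho f a b hb hts hfb m} ∈
      Filter.hyperfilter ℕ :=
  Classical.choose_spec (exists_rho f a b hb hts hfb m)

lemma rho_pair {m m' : ℕ} (h : m ≤ m') (n₀ : ℕ) : ∃ k, n₀ ≤ k ∧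
    Wit f a b hb hts hfb k % b ^ m = rho f a b hb hts hfb m ∧
    Wit f a b hb hts hfb k % b ^ m' = rho f a b hb hts hfb m' := by
  have h3 := (Filter.hyperfilter ℕ).toFilter.inter_mem (rho_mem f a b hb hts hfb m)
    (rho_mem f a b hb hts hfb m')
  have hinf : ({k : ℕ | Wit f a b hb hts hfb k % b ^ m = rho f a b hb hts hfb m} ∩
      {k : ℕ | Wit f a b hb hts hfb k % b ^ m' = rho f a b hb hts hfb m'}).Infinite := by
    by_contra hfin
    rw [Set.not_infinite] at hfin
    exact Filter.notMem_hyperfilter_of_finite hfin h3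
  obtain ⟨k, hk, hk2⟩ := hinf.exists_gt n₀
  exact ⟨k, le_of_lt hk2, hk.1, hk.2⟩

lemma rho_lt (m : ℕ) : rho f a b hb hts hfb m < b ^ m := by
  obtain ⟨k, _, hk, _⟩ := rho_pair f a b hb hts hfb (le_refl m) 0
  rw [← hk]
  exact Nat.mod_lt _ (pow_pos hb m)

lemma rho_coh {m m' : ℕ} (h : m ≤ m') :
    rho f a b hb hts hfb m = rho f a b hb hts hfb m' % b ^ m := by
  obtain ⟨k, _, h1, h2⟩ := rho_pair f a b hb hts hfb h 0
  rw [← h1, ← h2, Nat.mod_mod_of_dvd _ (pow_dvd_pow b h)]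

lemma rho_coh_dvd {m m' : ℕ} (h : m ≤ m') :
    ((b : ℤ) ^ m) ∣ (rho f a b hb hts hfb m' : ℤ) - (rho f a b hb hts hfb m : ℤ) := by
  rw [rho_coh f a b hb hts hfb h]
  set R := rho f a b hb hts hfb m' with hR
  have h2 := Nat.div_add_mod R (b ^ m)
  refine ⟨(R / b ^ m : ℕ), ?_⟩
  have h3 : (R : ℤ) = (b : ℤ) ^ m * ((R / b ^ m : ℕ) : ℤ) + ((R % b ^ m : ℕ) : ℤ) := by
    exact_mod_cast congrArg (fun t : ℕ => (t : ℤ)) h2.symm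
  linarith

/-- deep witnesses agreeing with `rho` -/
lemma rho_access (m : ℕ) (n₀ : ℕ) : ∃ k, n₀ ≤ k ∧
    ((b : ℤ) ^ m) ∣ ((Wit f a b hb hts hfb k : ℤ) - (rho f a b hb hts hfb m : ℤ)) := by
  obtain ⟨k, hk0, hk, _⟩ := rho_pair f a b hb hts hfb (le_refl m) n₀
  refine ⟨k, hk0, ?_⟩
  rw [← hk]
  set Wk := Wit f a b hb hts hfb k with hWk
  have h2 := Nat.div_add_mod Wk (b ^ m)
  refine ⟨(Wk / b ^ m : ℕ), ?_⟩
  have h3 : (Wk : ℤ) = (b : ℤ) ^ m * ((Wk / b ^ m : ℕ) : ℤ) + ((Wk % b ^ m : ℕ) : ℤ) := by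
    exact_mod_cast congrArg (fun t : ℕ => (t : ℤ)) h2.symm
  linarith

end Extract

section PolyTools

def compI : ℕ → Polynomial ℤ
  | 0 => Polynomial.X
  | (k+1) => f.comp (compI k)

lemma compI_eval (k : ℕ) (z : ℤ) : (compI f k).eval z = (F f)^[k] z := by
  induction k with
  | zero => simp [compI]
  | succ n ih =>
      rw [compI, Polynomial.eval_comp, ih, Function.iterate_succ_apply']
      rfl

lemma compI_eval_It (ℓ x : ℕ) :
    ((compI f ℓ) - Polynomial.X).eval (It f a x) = It f a (x + ℓ) - It f a x := by
  rw [Polynomial.eval_sub, Polynomial.eval_X, compI_eval, It_add]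

lemma exact_per {ℓ : ℕ} (hz : compI f ℓ - Polynomial.X = 0) {x y : ℕ}
    (hxy : x ≤ y) (hdvd : (ℓ : ℤ) ∣ (y : ℤ) - (x : ℤ)) (hℓ : 0 < ℓ) :
    It f a y = It f a x := by
  have hid : ∀ z : ℤ, (F f)^[ℓ] z = z := by
    intro z
    have h1 : (compI f ℓ - Polynomial.X).eval z = 0 := by rw [hz]; simp
    rw [Polynomial.eval_sub, Polynomial.eval_X, compI_eval] at h1
    linarith
  obtain ⟨k, hk⟩ : ∃ k : ℕ, y = x + k * ℓ := by
    obtain ⟨c, hc⟩ := hdvd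
    have hc0 : 0 ≤ c := by nlinarith [hc, Int.ofNat_le.2 hxy]
    refine ⟨c.toNat, ?_⟩
    have : (y : ℤ) = x + c.toNat * ℓ := by
      rw [Int.toNat_of_nonneg hc0]; linarith
    exact_mod_cast this
  subst hk
  induction k with
  | zero => simp
  | succ j ih =>
      have h2 : x + (j + 1) * ℓ = (x + j * ℓ) + ℓ := by ring
      rw [h2, It_add, hid, ih]
      · omega
      · exact ⟨j, by push_cast; ring⟩

lemma eval_abs_le (P : Polynomial ℤ) (v : ℕ) (hv : 1 ≤ v) :
    |P.eval ((v : ℕ) : ℤ)| ≤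
      (∑ i ∈ Finset.range (P.natDegree + 1), |P.coeff i|) * ((v : ℕ) : ℤ) ^ P.natDegree := by
  rw [Polynomial.eval_eq_sum_range]
  refine le_trans (Finset.abs_sum_le_sum_abs _ _) ?_
  rw [Finset.sum_mul]
  refine Finset.sum_le_sum ?_
  intro i hi
  rw [abs_mul, abs_pow]
  have h1 : |((v : ℕ) : ℤ)| = ((v : ℕ) : ℤ) := abs_of_nonneg (by positivity)
  rw [h1]
  refine mul_le_mul_of_nonneg_left ?_ (abs_nonneg _)
  refine pow_le_pow_right₀ (by exact_mod_cast hv) ?_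
  rw [Finset.mem_range] at hi
  omega

lemma root_bound (P : Polynomial ℤ) (hP : P ≠ 0) :
    ∃ RB : ℕ, ∀ v : ℕ, RB < v → P.eval ((v : ℕ) : ℤ) ≠ 0 := by
  have hfin : {x : ℤ | P.IsRoot x}.Finite := Polynomial.finite_setOf_isRoot hP
  obtain ⟨u, hu⟩ := hfin.bddAbove
  refine ⟨u.toNat, ?_⟩
  intro v hv hroot
  have h1 : ((v : ℕ) : ℤ) ∈ {x : ℤ | P.IsRoot x} := hroot
  have h2 := hu h1
  have h3 : u ≤ (u.toNat : ℤ) := Int.self_le_toNat u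
  have h4 : ((u.toNat : ℕ) : ℤ) < ((v : ℕ) : ℤ) := by exact_mod_cast hv
  omega

lemma exp_beats_poly (A C D : ℕ) : ∃ N : ℕ, ∀ n : ℕ, N ≤ n → A * (C * n + C) ^ D < 2 ^ n := by
  have h := isLittleO_pow_const_const_pow_of_one_lt (R := ℝ) D (by norm_num : (1:ℝ) < 2)
  have hden : (0:ℝ) < 2 * (A + 1) * (2 * C + 2) ^ D := by positivity
  have hc : (0:ℝ) < 1 / (2 * (A + 1) * (2 * C + 2) ^ D) := by positivity
  have h2 := h.def hc
  rw [Filter.eventually_atTop] at h2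
  obtain ⟨N, hN⟩ := h2
  refine ⟨max N 1, ?_⟩
  intro n hn
  have hn1 : 1 ≤ n := le_trans (le_max_right _ _) hn
  have h3 := hN n (le_trans (le_max_left _ _) hn)
  rw [Real.norm_eq_abs, Real.norm_eq_abs, abs_of_nonneg (by positivity),
    abs_of_nonneg (by positivity)] at h3
  have key : ((A : ℝ)) * ((C : ℝ) * n + C) ^ D < 2 ^ n := by
    have hCn : ((C : ℝ) * n + C) ≤ (2 * C + 2) * n := by
      have hn' : (1:ℝ) ≤ (n : ℝ) := by exact_mod_cast hn1
      nlinarith [Nat.cast_nonneg (α := ℝ) C]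
    have hCn0 : (0:ℝ) ≤ (C : ℝ) * n + C := by positivity
    have h4 : ((C : ℝ) * n + C) ^ D ≤ ((2 * C + 2) * n) ^ D :=
      pow_le_pow_left₀ hCn0 hCn D
    have h5 : ((2 * C + 2 : ℝ) * n) ^ D = (2 * C + 2) ^ D * (n : ℝ) ^ D := by
      rw [mul_pow]
    have h6 : (A : ℝ) * ((C : ℝ) * n + C) ^ D
        ≤ (A + 1) * ((2 * C + 2) ^ D * (n : ℝ) ^ D) := by
      rw [← h5]
      refine mul_le_mul (by linarith [Nat.cast_nonneg (α := ℝ) A]) h4 (by positivity) (by positivity)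
    have h7 : (A + 1 : ℝ) * ((2 * C + 2) ^ D * (n : ℝ) ^ D)
        ≤ (A + 1) * ((2 * C + 2) ^ D * ((1 / (2 * (A + 1) * (2 * C + 2) ^ D)) * 2 ^ n)) := by
      refine mul_le_mul_of_nonneg_left ?_ (by positivity)
      exact mul_le_mul_of_nonneg_left h3 (by positivity)
    have h8 : (A + 1 : ℝ) * ((2 * C + 2) ^ D * ((1 / (2 * (A + 1) * (2 * C + 2) ^ D)) * 2 ^ n))
        = 2 ^ n / 2 := by
      field_simp
    have h9 : (2:ℝ) ^ n / 2 < 2 ^ n := by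
      have : (0:ℝ) < 2 ^ n := by positivity
      linarith
    linarith
  have key2 : ((A * (C * n + C) ^ D : ℕ) : ℝ) < ((2 ^ n : ℕ) : ℝ) := by
    push_cast
    exact key
  exact_mod_cast key2

end PolyTools

section Assemble

variable (b : ℕ) (hb : 0 < b) (hts : PolyTowerStable f) (hfb : FValid f b)
variable (x₁ : ℕ)

/-- digit remainders -/
def ds (n : ℕ) : ℤ :=
  ((rho f a b hb hts hfb (n + b * b) : ℤ) - (x₁ : ℤ)) % ((b : ℤ) ^ n)

/-- the truncation sequence -/
def xs (n : ℕ) : ℕ := x₁ + (ds f a b hb hts hfb x₁ n).toNat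

variable (hb2 : 2 ≤ b)

lemma ds_nonneg (n : ℕ) : 0 ≤ ds f a b hb hts hfb x₁ n :=
  Int.emod_nonneg _ (by positivity)

lemma ds_lt (n : ℕ) : ds f a b hb hts hfb x₁ n < (b : ℤ) ^ n :=
  Int.emod_lt_of_pos _ (by positivity)

lemma ds_cong (n : ℕ) : ((b : ℤ) ^ n) ∣
    ((rho f a b hb hts hfb (n + b * b) : ℤ) - (x₁ : ℤ)) - ds f a b hb hts hfb x₁ n := by
  rw [ds]
  set z := ((rho f a b hb hts hfb (n + b * b) : ℤ) - (x₁ : ℤ))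
  exact ⟨z / ((b : ℤ) ^ n), by linarith [Int.emod_add_mul_ediv z ((b : ℤ) ^ n)]⟩

lemma xs_cast (n : ℕ) : ((xs f a b hb hts hfb x₁ n : ℕ) : ℤ)
    = (x₁ : ℤ) + ds f a b hb hts hfb x₁ n := by
  rw [xs]
  push_cast
  rw [Int.toNat_of_nonneg (ds_nonneg f a b hb hts hfb x₁ n)]

variable (hx₁ : ((b : ℤ) ^ (b * b)) ∣ ((x₁ : ℤ) - (rho f a b hb hts hfb (b * b) : ℤ)))

include hx₁ in
lemma rho_x₁ (m : ℕ) (hm : b * b ≤ m) :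
    ((b : ℤ) ^ (b * b)) ∣ ((rho f a b hb hts hfb m : ℤ) - (x₁ : ℤ)) := by
  have h1 := rho_coh_dvd f a b hb hts hfb hm
  have h2 : (rho f a b hb hts hfb m : ℤ) - (x₁ : ℤ)
      = ((rho f a b hb hts hfb m : ℤ) - (rho f a b hb hts hfb (b * b) : ℤ))
        - ((x₁ : ℤ) - (rho f a b hb hts hfb (b * b) : ℤ)) := by ring
  rw [h2]
  exact dvd_sub h1 hx₁

include hx₁ in
lemma ds_zero {n : ℕ} (hn : n ≤ b * b) : ds f a b hb hts hfb x₁ n = 0 := by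
  rw [ds]
  refine Int.emod_eq_zero_of_dvd ?_
  refine dvd_trans (pow_dvd_pow _ hn) ?_
  exact rho_x₁ f a b hb hts hfb x₁ hx₁ (n + b * b) (by omega)

include hx₁ in
lemma xs_rho_n (n : ℕ) : ((b : ℤ) ^ n) ∣
    ((xs f a b hb hts hfb x₁ n : ℕ) : ℤ) - (rho f a b hb hts hfb (n + b * b) : ℤ) := by
  rw [xs_cast]
  have := ds_cong f a b hb hts hfb x₁ n
  have h2 : ((x₁ : ℤ) + ds f a b hb hts hfb x₁ n) - (rho f a b hb hts hfb (n + b * b) : ℤ)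
      = -((((rho f a b hb hts hfb (n + b * b) : ℤ) - (x₁ : ℤ)))
        - ds f a b hb hts hfb x₁ n) := by ring
  rw [h2]
  exact dvd_neg.2 this

include hx₁ in
lemma xs_rho_N (n : ℕ) : ((b : ℤ) ^ (b * b)) ∣
    ((xs f a b hb hts hfb x₁ n : ℕ) : ℤ) - (rho f a b hb hts hfb (n + b * b) : ℤ) := by
  rcases le_total (b * b) n with h | h
  · exact dvd_trans (pow_dvd_pow _ h) (xs_rho_n f a b hb hts hfb x₁ hx₁ n)
  · rw [xs_cast, ds_zero f a b hb hts hfb x₁ hx₁ h, add_zero]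
    exact dvd_neg.1 (by
      have := rho_x₁ f a b hb hts hfb x₁ hx₁ (n + b * b) (by omega)
      have h3 : -(((x₁ : ℤ)) - (rho f a b hb hts hfb (n + b * b) : ℤ))
          = (rho f a b hb hts hfb (n + b * b) : ℤ) - (x₁ : ℤ) := by ring
      rw [h3]
      exact this)

include hx₁ in
lemma xs_digit (n : ℕ) : ∃ c : ℕ, c < b ∧
    xs f a b hb hts hfb x₁ (n + 1) = c * b ^ n + xs f a b hb hts hfb x₁ n := by
  have hcoh : ((b : ℤ) ^ n) ∣
      (ds f a b hb hts hfb x₁ (n + 1) - ds f a b hb hts hfb x₁ n) := by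
    have h1 := ds_cong f a b hb hts hfb x₁ (n + 1)
    have h2 := ds_cong f a b hb hts hfb x₁ n
    have h3 : ((b : ℤ) ^ n) ∣ ((rho f a b hb hts hfb (n + 1 + b * b) : ℤ)
        - (rho f a b hb hts hfb (n + b * b) : ℤ)) := by
      refine dvd_trans (pow_dvd_pow _ (by omega : n ≤ n + b * b)) ?_
      exact rho_coh_dvd f a b hb hts hfb (by omega)
    have h4 : ds f a b hb hts hfb x₁ (n + 1) - ds f a b hb hts hfb x₁ n
        = ((rho f a b hb hts hfb (n + 1 + b * b) : ℤ)
            - (rho f a b hb hts hfb (n + b * b) : ℤ))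
          - (((rho f a b hb hts hfb (n + 1 + b * b) : ℤ) - (x₁ : ℤ))
              - ds f a b hb hts hfb x₁ (n + 1))
          + (((rho f a b hb hts hfb (n + b * b) : ℤ) - (x₁ : ℤ))
              - ds f a b hb hts hfb x₁ n) := by ring
    rw [h4]
    exact dvd_add (dvd_sub h3 (dvd_trans (pow_dvd_pow _ (by omega)) h1)) h2
  obtain ⟨e, he⟩ := hcoh
  have hd1 := ds_nonneg f a b hb hts hfb x₁ (n + 1)
  have hd2 := ds_nonneg f a b hb hts hfb x₁ n
  have hd3 := ds_lt f a b hb hts hfb x₁ (n + 1)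
  have hd4 := ds_lt f a b hb hts hfb x₁ n
  have hbn : (0 : ℤ) < (b : ℤ) ^ n := by positivity
  have he0 : 0 ≤ e := by
    by_contra hneg
    push_neg at hneg
    have : e ≤ -1 := by omega
    nlinarith
  have heb : e < b := by
    by_contra hge
    push_neg at hge
    have h5 : ((b : ℤ)) ≤ e := by exact_mod_cast hge
    have h6 : (b : ℤ) ^ (n + 1) = (b : ℤ) ^ n * b := by ring
    nlinarith
  refine ⟨e.toNat, by omega, ?_⟩
  have he2 : ds f a b hb hts hfb x₁ (n + 1) = ds f a b hb hts hfb x₁ n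
      + (e.toNat : ℤ) * (b : ℤ) ^ n := by
    rw [Int.toNat_of_nonneg he0]
    linarith
  have := xs_cast f a b hb hts hfb x₁ (n + 1)
  rw [he2] at this
  have h7 := xs_cast f a b hb hts hfb x₁ n
  have h8 : ((xs f a b hb hts hfb x₁ (n + 1) : ℕ) : ℤ)
      = ((e.toNat * b ^ n + xs f a b hb hts hfb x₁ n : ℕ) : ℤ) := by
    push_cast
    push_cast at this h7
    linarith
  exact_mod_cast h8

end Assemble

section Verify

variable (b : ℕ) (hb : 0 < b) (hts : PolyTowerStable f) (hfb : FValid f b)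
variable (x₁ : ℕ) (hb2 : 2 ≤ b)
variable (hx₁ : ((b : ℤ) ^ (b * b)) ∣ ((x₁ : ℤ) - (rho f a b hb hts hfb (b * b) : ℤ)))

lemma per_sub_abs {M : ℤ} {s ℓ : ℕ} (h : Per f a M s ℓ) {x y : ℕ} (hx : x ≥ s) (hy : y ≥ s)
    (hdvd : (ℓ : ℤ) ∣ (x : ℤ) - (y : ℤ)) (hl : 0 < ℓ) : M ∣ It f a x - It f a y := by
  rcases le_total y x with hle | hle
  · exact Per.sub f a h hy hle hdvd hl
  · have h2 := Per.sub f a h hx hle (by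
      have : (ℓ : ℤ) ∣ -(((x : ℤ)) - (y : ℤ)) := dvd_neg.2 hdvd
      simpa using this) hl
    have := dvd_neg.2 h2
    simpa using this

include hb hb2 hts hfb in
lemma Lt_dvd_pow {p : ℕ} (hp : p ∈ b.primeFactors) :
    (Lp f a p * tp f a p) ∣ b ^ (b * b) := by
  have hpp : p.Prime := Nat.prime_of_mem_primeFactors hp
  have hpb : p ∣ b := Nat.dvd_of_mem_primeFactors hp
  have hpleb : p ≤ b := Nat.le_of_dvd hb hpb
  have h1 : Lp f a p * tp f a p ∣ b ^ (Lp f a p * tp f a p) := by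
    refine divisor_pow b _ hb2 (Lt_pos f a hpp) ?_
    exact fun q hq hqd => fac_dvd_b f a b hpp hpb hfb q hq hqd
  refine dvd_trans h1 (pow_dvd_pow _ ?_)
  have h2 : Lp f a p < p := Lp_lt f a hpp hts
  have h3 : tp f a p ≤ p - 1 := Nat.le_of_dvd (by have := hpp.two_le; omega) (tp_dvd f a hpp)
  have h2b := hpp.two_le
  have h4 : Lp f a p ≤ p - 1 := by omega
  have h5 : Lp f a p * tp f a p ≤ (p - 1) * (p - 1) := Nat.mul_le_mul h4 h3
  have h6 : (p - 1) * (p - 1) ≤ b * b := Nat.mul_le_mul (by omega) (by omega)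
  omega

include hx₁ in
lemma deep_witness (n : ℕ) (hn : 1 ≤ n) : ∃ w : ℕ,
    FL f a b n ≤ w ∧
    (∀ p ∈ b.primeFactors, (((p : ℕ) : ℤ) ^ n) ∣ G f a w) ∧
    ((b : ℤ) ^ n ∣ (((xs f a b hb hts hfb x₁ n : ℕ) : ℤ) - (w : ℤ))) ∧
    ((b : ℤ) ^ (b * b) ∣ (((xs f a b hb hts hfb x₁ n : ℕ) : ℤ) - (w : ℤ))) := by
  obtain ⟨k, hk0, hkdvd⟩ := rho_access f a b hb hts hfb (n + b * b) (n + b * b)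
  set w := Wit f a b hb hts hfb k with hw
  obtain ⟨hwFL, hwG⟩ := Wit_spec f a b hb hts hfb k
  have hnk : n ≤ k + 1 := by omega
  refine ⟨w, ?_, ?_, ?_, ?_⟩
  · exact le_trans (FL_mono f a b hnk) hwFL
  · intro p hp
    exact dvd_trans (pow_dvd_pow _ hnk) (hwG p hp)
  · have h1 := xs_rho_n f a b hb hts hfb x₁ hx₁ n
    have h2 : ((b : ℤ) ^ n) ∣ ((rho f a b hb hts hfb (n + b * b) : ℤ) - (w : ℤ)) := by
      refine dvd_trans (pow_dvd_pow _ (by omega : n ≤ n + b * b)) ?_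
      have := dvd_neg.2 hkdvd
      simpa using this
    have h3 : (((xs f a b hb hts hfb x₁ n : ℕ) : ℤ) - (w : ℤ))
        = (((xs f a b hb hts hfb x₁ n : ℕ) : ℤ)
            - (rho f a b hb hts hfb (n + b * b) : ℤ))
          + ((rho f a b hb hts hfb (n + b * b) : ℤ) - (w : ℤ)) := by ring
    rw [h3]
    exact dvd_add h1 h2
  · have h1 := xs_rho_N f a b hb hts hfb x₁ hx₁ n
    have h2 : ((b : ℤ) ^ (b * b)) ∣ ((rho f a b hb hts hfb (n + b * b) : ℤ) - (w : ℤ)) := by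
      refine dvd_trans (pow_dvd_pow _ (by omega : b * b ≤ n + b * b)) ?_
      have := dvd_neg.2 hkdvd
      simpa using this
    have h3 : (((xs f a b hb hts hfb x₁ n : ℕ) : ℤ) - (w : ℤ))
        = (((xs f a b hb hts hfb x₁ n : ℕ) : ℤ)
            - (rho f a b hb hts hfb (n + b * b) : ℤ))
          + ((rho f a b hb hts hfb (n + b * b) : ℤ) - (w : ℤ)) := by ring
    rw [h3]
    exact dvd_add h1 h2

include hb hb2 hts hfb in
lemma transfer {n : ℕ} (hn : 1 ≤ n) {p : ℕ} (hp : p ∈ b.primeFactors)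
    {X w : ℕ}
    (hXfl : sp f a p + cp f a p * n ≤ X) (hwfl : FL f a b n ≤ w)
    (hGw : (((p : ℕ) : ℤ) ^ n) ∣ G f a w)
    (hd1 : (b : ℤ) ^ n ∣ ((X : ℤ) - (w : ℤ)))
    (hd2 : (b : ℤ) ^ (b * b) ∣ ((X : ℤ) - (w : ℤ))) :
    (((p : ℕ) : ℤ) ^ n) ∣ G f a X := by
  have hpp : p.Prime := Nat.prime_of_mem_primeFactors hp
  have hpb : p ∣ b := Nat.dvd_of_mem_primeFactors hp
  set d : ℤ := (X : ℤ) - (w : ℤ) with hd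
  -- p^(n-1) * (Lp*tp) divides d
  have hp1 : (p : ℤ) ^ (n - 1) ∣ d := by
    refine dvd_trans (pow_dvd_pow _ (by omega : n - 1 ≤ n)) ?_
    refine dvd_trans (pow_dvd_pow_of_dvd ?_ n) hd1
    exact_mod_cast Int.natCast_dvd_natCast.2 hpb
  have hp2 : ((Lp f a p * tp f a p : ℕ) : ℤ) ∣ d := by
    refine dvd_trans ?_ hd2
    exact_mod_cast Int.natCast_dvd_natCast.2 (Lt_dvd_pow f a b hb hts hfb hb2 hp)
  have hcop : Nat.Coprime (p ^ (n - 1)) (Lp f a p * tp f a p) := by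
    refine Nat.Coprime.pow_left _ ?_
    exact (Nat.Prime.coprime_iff_not_dvd hpp).2 (p_not_dvd f a hpp hts)
  have hprod : ((p ^ (n - 1) * (Lp f a p * tp f a p) : ℕ) : ℤ) ∣ d := by
    rw [Int.natCast_dvd]
    refine Nat.Coprime.mul_dvd_of_dvd_of_dvd hcop ?_ ?_
    · rw [← Int.natCast_dvd]
      exact_mod_cast hp1
    · rw [← Int.natCast_dvd]
      exact hp2
  -- apply the key periodicity
  have hper := perKey f a hpp n hn
  have hIt : (((p : ℕ) : ℤ) ^ n) ∣ It f a X - It f a w := by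
    refine per_sub_abs f a hper ?_ ?_ ?_ ?_
    · exact hXfl
    · exact le_trans (FL_ge f a b hp (le_refl n)) hwfl
    · push_cast at hprod ⊢
      convert hprod using 2 <;> ring
    · exact Nat.mul_pos (pow_pos hpp.pos _) (Lt_pos f a hpp)
  have hsplit : G f a X = (It f a X - It f a w) + G f a w + ((w : ℤ) - (X : ℤ)) := by
    rw [G, G]; ring
  rw [hsplit]
  refine dvd_add (dvd_add hIt hGw) ?_
  have : ((w : ℤ) - (X : ℤ)) = -d := by rw [hd]; ring
  rw [this]
  refine dvd_neg.2 ?_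
  refine dvd_trans ?_ hd1
  exact pow_dvd_pow_of_dvd (by exact_mod_cast Int.natCast_dvd_natCast.2 hpb) n

end Verify

section Final

variable (b : ℕ) (hb : 0 < b) (hts : PolyTowerStable f) (hfb : FValid f b) (hb2 : 2 ≤ b)

lemma FL_lin (n : ℕ) (hn : 1 ≤ n) : FL f a b n ≤ FL f a b 1 * n := by
  rw [FL, FL, Finset.sum_mul]
  refine Finset.sum_le_sum ?_
  intro i _
  have h1 : 1 * n = n := by ring
  have : sp f a i + Lp f a i * n ≤ (sp f a i + Lp f a i * 1) * n := by nlinarith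
  exact this

include hb hb2 hts hfb in
lemma final_main : ∃ x : ℕ → ℕ,
    (∀ n : ℕ, 1 ≤ n → 0 < x n) ∧
    (∀ n : ℕ, 1 ≤ n → ((b : ℤ) ^ n) ∣ G f a (x n)) ∧
    (∀ n : ℕ, 1 ≤ n → ∃ c : ℕ, c < b ∧ x (n + 1) = c * b ^ n + x n) := by
  classical
  -- we choose the offset K according to the case analysis, then use `xs`.
  suffices hK : ∃ K : ℕ, 1 ≤ K ∧ ∀ n : ℕ, 1 ≤ n → ∀ p ∈ b.primeFactors,
      (((p : ℕ) : ℤ) ^ n) ∣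
        G f a (xs f a b hb hts hfb (rho f a b hb hts hfb (b * b) + b ^ (b * b) * K) n) by
    obtain ⟨K, hK1, hKdvd⟩ := hK
    set x₁ : ℕ := rho f a b hb hts hfb (b * b) + b ^ (b * b) * K with hx₁def
    have hx₁ : ((b : ℤ) ^ (b * b)) ∣ ((x₁ : ℤ) - (rho f a b hb hts hfb (b * b) : ℤ)) := by
      refine ⟨(K : ℤ), ?_⟩
      rw [hx₁def]
      push_cast
      ring
    have hx₁pos : 1 ≤ x₁ := by
      have hbb : 1 ≤ b ^ (b * b) := Nat.one_le_pow _ _ hb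
      have : K ≤ b ^ (b * b) * K := Nat.le_mul_of_pos_left K (by omega)
      omega
    refine ⟨xs f a b hb hts hfb x₁, ?_, ?_, ?_⟩
    · intro n hn
      have : x₁ ≤ xs f a b hb hts hfb x₁ n := Nat.le_add_right _ _
      omega
    · intro n hn
      exact int_crt b n hfb.1 hb _ (fun p hp => hKdvd n hn p hp)
    · intro n hn
      exact xs_digit f a b hb hts hfb x₁ hx₁ n
  -- now produce K per case
  by_cases hA : ∃ p ∈ b.primeFactors, cp f a p ≠ 0
  · obtain ⟨q, hq, hcq⟩ := hA
    have hqp : q.Prime := Nat.prime_of_mem_primeFactors hq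
    set ℓq := Lp f a q with hlq
    have hℓqpos : 0 < ℓq := Lp_pos f a hqp.pos
    by_cases hZ : compI f ℓq - Polynomial.X = 0
    · -- exact periodicity case
      refine ⟨1, le_refl 1, ?_⟩
      intro n hn p hp
      set x₁ : ℕ := rho f a b hb hts hfb (b * b) + b ^ (b * b) * 1 with hx₁def
      have hx₁ : ((b : ℤ) ^ (b * b)) ∣ ((x₁ : ℤ) - (rho f a b hb hts hfb (b * b) : ℤ)) := by
        refine ⟨1, ?_⟩; rw [hx₁def]; push_cast; ring
      obtain ⟨w, hwFL, hwG, hd1, hd2⟩ := deep_witness f a b hb hts hfb x₁ hx₁ n hn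
      set X := xs f a b hb hts hfb x₁ n with hX
      have hGw : ((b : ℤ) ^ n) ∣ G f a w := int_crt b n hfb.1 hb _ hwG
      have hItEq : It f a X = It f a w := by
        have hdvdℓ : ((ℓq : ℕ) : ℤ) ∣ ((X : ℤ) - (w : ℤ)) := by
          refine dvd_trans ?_ hd2
          have h1 : ℓq ∣ b ^ (b * b) :=
            dvd_trans ⟨tp f a q, rfl⟩ (Lt_dvd_pow f a b hb hts hfb hb2 hq)
          exact_mod_cast Int.natCast_dvd_natCast.2 h1
        rcases le_total X w with hle | hle
        · have h2 : It f a w = It f a X := exact_per f a hZ hle (by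
            have := dvd_neg.2 hdvdℓ
            simpa using this) hℓqpos
          exact h2.symm
        · exact exact_per f a hZ hle hdvdℓ hℓqpos
      have hsplit : G f a X = G f a w + ((w : ℤ) - (X : ℤ)) := by
        rw [G, G, hItEq]; ring
      have hgoal : ((b : ℤ) ^ n) ∣ G f a X := by
        rw [hsplit]
        refine dvd_add hGw ?_
        have : ((w : ℤ) - (X : ℤ)) = -(((X : ℤ)) - (w : ℤ)) := by ring
        rw [this]
        exact dvd_neg.2 hd1
      exact dvd_trans (pow_dvd_pow_of_dvd
        (by exact_mod_cast Int.natCast_dvd_natCast.2 (Nat.dvd_of_mem_primeFactors hp)) n) hgoal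
    · -- the Liouville-type case
      set Φ := compI f ℓq - Polynomial.X with hΦ
      set D := Φ.natDegree with hD
      set A : ℤ := ∑ i ∈ Finset.range (D + 1), |Φ.coeff i| with hA2
      have hA0 : 0 ≤ A := Finset.sum_nonneg (fun i _ => abs_nonneg _)
      set Anat := A.toNat with hAnat
      obtain ⟨RB, hRB⟩ := root_bound Φ hZ
      set CC := FL f a b 1 + 1 with hCC
      obtain ⟨N₅, hN₅⟩ := exp_beats_poly Anat CC D
      refine ⟨FL f a b N₅ + RB + 1, by omega, ?_⟩
      intro n hn p hp
      set x₁ : ℕ := rho f a b hb hts hfb (b * b)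
        + b ^ (b * b) * (FL f a b N₅ + RB + 1) with hx₁def
      have hx₁ : ((b : ℤ) ^ (b * b)) ∣ ((x₁ : ℤ) - (rho f a b hb hts hfb (b * b) : ℤ)) := by
        refine ⟨((FL f a b N₅ + RB + 1 : ℕ) : ℤ), ?_⟩; rw [hx₁def]; push_cast; ring
      have hx₁ge : FL f a b N₅ + RB + 1 ≤ x₁ := by
        have hbb : 1 ≤ b ^ (b * b) := Nat.one_le_pow _ _ hb
        have := Nat.le_mul_of_pos_left (FL f a b N₅ + RB + 1) (show 0 < b ^ (b*b) by omega)
        omega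
      set X := xs f a b hb hts hfb x₁ n with hX
      have hXx₁ : x₁ ≤ X := Nat.le_add_right _ _
      obtain ⟨w, hwFL, hwG, hd1, hd2⟩ := deep_witness f a b hb hts hfb x₁ hx₁ n hn
      -- growth : FL n ≤ X
      have hgrow : FL f a b n ≤ X := by
        by_contra hlt
        push_neg at hlt
        rcases le_total n N₅ with hcase | hcase
        · have := FL_mono f a b hcase
          omega
        · -- Liouville chain
          haveI : Fact q.Prime := ⟨hqp⟩
          have hXw : ((q : ℕ) : ℤ) ^ n ∣ ((X : ℤ) - (w : ℤ)) :=
            dvd_trans (pow_dvd_pow_of_dvd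
              (by exact_mod_cast Int.natCast_dvd_natCast.2 (Nat.dvd_of_mem_primeFactors hq)) n)
              hd1
          have hGwq : ((q : ℕ) : ℤ) ^ n ∣ G f a w := hwG q hq
          have hXIt : ((q : ℕ) : ℤ) ^ n ∣ ((X : ℤ) - It f a w) := by
            have h1 : ((X : ℤ) - It f a w) = ((X : ℤ) - (w : ℤ)) - G f a w := by
              rw [G]; ring
            rw [h1]; exact dvd_sub hXw hGwq
          have hΦcong : ((q : ℕ) : ℤ) ^ n ∣ (Φ.eval ((X : ℕ) : ℤ) - Φ.eval (It f a w)) :=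
            dvd_trans hXIt (Polynomial.sub_dvd_eval_sub _ _ _)
          have hΦw : ((q : ℕ) : ℤ) ^ n ∣ Φ.eval (It f a w) := by
            rw [hΦ, compI_eval_It]
            refine perKeyB f a hqp hcq n hn w ?_
            exact le_trans (FL_ge f a b hq (le_refl n)) hwFL
          have hΦX : ((q : ℕ) : ℤ) ^ n ∣ Φ.eval ((X : ℕ) : ℤ) := by
            have h1 : Φ.eval ((X : ℕ) : ℤ)
                = (Φ.eval ((X : ℕ) : ℤ) - Φ.eval (It f a w)) + Φ.eval (It f a w) := by ring
            rw [h1]; exact dvd_add hΦcong hΦw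
          have hne : Φ.eval ((X : ℕ) : ℤ) ≠ 0 := by
            refine hRB X ?_
            omega
          have hle1 : ((q : ℕ) : ℤ) ^ n ≤ |Φ.eval ((X : ℕ) : ℤ)| :=
            Int.le_of_dvd (abs_pos.2 hne) ((dvd_abs _ _).2 hΦX)
          have hle2 : |Φ.eval ((X : ℕ) : ℤ)| ≤ A * ((X : ℕ) : ℤ) ^ D :=
            eval_abs_le Φ X (by omega)
          have hXle : X ≤ CC * n + CC := by
            have h1 : FL f a b n ≤ FL f a b 1 * n := FL_lin f a b n hn
            have h2 : FL f a b 1 * n ≤ CC * n := Nat.mul_le_mul_right _ (by omega)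
            omega
          have hle3 : A * ((X : ℕ) : ℤ) ^ D ≤ A * ((CC * n + CC : ℕ) : ℤ) ^ D := by
            refine mul_le_mul_of_nonneg_left ?_ hA0
            refine pow_le_pow_left₀ (by positivity) ?_ D
            exact_mod_cast hXle
          have hcast : A * ((CC * n + CC : ℕ) : ℤ) ^ D
              = ((Anat * (CC * n + CC) ^ D : ℕ) : ℤ) := by
            push_cast
            rw [hAnat, Int.toNat_of_nonneg hA0]
          have hlt2 : ((Anat * (CC * n + CC) ^ D : ℕ) : ℤ) < ((2 ^ n : ℕ) : ℤ) := by
            exact_mod_cast hN₅ n hcase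
          have hfin : ((2 ^ n : ℕ) : ℤ) ≤ ((q : ℕ) : ℤ) ^ n := by
            have h4 : (2 : ℕ) ^ n ≤ q ^ n := Nat.pow_le_pow_left hqp.two_le n
            exact_mod_cast h4
          linarith
      -- now transfer
      refine transfer f a b hb hts hfb hb2 hn hp ?_ hwFL (hwG p hp) hd1 hd2
      exact le_trans (FL_ge f a b hp (le_refl n)) hgrow
  · -- tame case : no superattracting primes
    push_neg at hA
    refine ⟨FL f a b 0 + 1, by omega, ?_⟩
    intro n hn p hp
    set x₁ : ℕ := rho f a b hb hts hfb (b * b) + b ^ (b * b) * (FL f a b 0 + 1) with hx₁def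
    have hx₁ : ((b : ℤ) ^ (b * b)) ∣ ((x₁ : ℤ) - (rho f a b hb hts hfb (b * b) : ℤ)) := by
      refine ⟨((FL f a b 0 + 1 : ℕ) : ℤ), ?_⟩; rw [hx₁def]; push_cast; ring
    have hx₁ge : FL f a b 0 + 1 ≤ x₁ := by
      have hbb : 1 ≤ b ^ (b * b) := Nat.one_le_pow _ _ hb
      have := Nat.le_mul_of_pos_left (FL f a b 0 + 1) (show 0 < b ^ (b*b) by omega)
      omega
    obtain ⟨w, hwFL, hwG, hd1, hd2⟩ := deep_witness f a b hb hts hfb x₁ hx₁ n hn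
    refine transfer f a b hb hts hfb hb2 hn hp ?_ hwFL (hwG p hp) hd1 hd2
    have h1 : cp f a p = 0 := hA p hp
    rw [h1]
    have h2 : sp f a p + 0 * n ≤ FL f a b 0 := by
      have := FL_ge f a b hp (le_refl 0)
      simpa using this
    have h3 : x₁ ≤ xs f a b hb hts hfb x₁ n := Nat.le_add_right _ _
    omega

end Final

end
end Stmt2

theorem stmt_2 (f : Polynomial ℤ) (hts : PolyTowerStable f)
    (a : ℕ) (ha : 0 < a) (b : ℕ) (hb : 0 < b) (hfb : FValid f b) :
    ∃ x : ℕ → ℕ,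
      (∀ n : ℕ, 1 ≤ n → 0 < x n) ∧
      (∀ n : ℕ, 1 ≤ n →
        (b : ℤ) ^ n ∣ (fun z => f.eval z)^[x n] (a : ℤ) - (x n : ℤ)) ∧
      (∀ n : ℕ, 2 ≤ n → ∃ c : ℕ, c < b ∧ x n = c * b ^ (n - 1) + x (n - 1)) := by
  rcases Nat.lt_or_ge b 2 with hb1 | hb2
  · have hb1' : b = 1 := by omega
    subst hb1'
    exact ⟨fun _ => 1, fun n _ => Nat.one_pos, fun n _ => by simp,
      fun n _ => ⟨0, by omega, by simp⟩⟩
  · obtain ⟨x, h1, h2, h3⟩ := Stmt2.final_main f a b hb hts hfb hb2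
    refine ⟨x, h1, ?_, ?_⟩
    · intro n hn
      exact h2 n hn
    · intro n hn
      obtain ⟨c, hc1, hc2⟩ := h3 (n - 1) (by omega)
      refine ⟨c, hc1, ?_⟩
      have hneq : n - 1 + 1 = n := by omega
      rw [hneq] at hc2
      exact hc2
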